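/- arXiv:1302.3867 — 2 statements merged into one kernel-verified Lean document; each statement's English description precedes it below -/
import Mathlib

section
/- Let G = G_1 ⊕_k G_2 be a grounded k-edge sum. If G_1 or G_2 admits a weak immersion of an arbitrary graph H, then G admits a weak immersion of H. -/
open Sym2

/-- A finite multigraph: finite vertex and edge types, each edge has an
unordered pair of endpoints, and there are no loops. -/
structure Multigraph where
  V : Type
  E : Type
  finV : Finite V
  finE : Finite E
  ends : E → Sym2 V
  no_loops : ∀ e, ¬ (ends e).IsDiag

attribute [instance] Multigraph.finV Multigraph.finE

namespace Multigraph

/-- `IsWalk G vs es`: `vs` is the vertex sequence and `es` the edge sequence of a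
walk in `G`. -/
inductive IsWalk (G : Multigraph) : List G.V → List G.E → Prop
  | nil (v : G.V) : IsWalk G [v] []
  | cons {v : G.V} {vs : List G.V} {es : List G.E} (u : G.V) (e : G.E)
      (he : G.ends e = s(u, v)) (hw : IsWalk G (v :: vs) es) :
      IsWalk G (u :: v :: vs) (e :: es)

/-- A path from `a` to `b` in the multigraph `G`, given by its vertex sequence `vs`
and edge sequence `es`. -/
def IsPathBetween (G : Multigraph) (a b : G.V) (vs : List G.V) (es : List G.E) : Prop :=
  G.IsWalk vs es ∧ vs.Nodup ∧ vs.head? = some a ∧ vs.getLast? = some b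

/-- A weak immersion of `H` into `G`. -/
structure WeakImmersion (H G : Multigraph) where
  vmap : H.V → G.V
  vmap_inj : Function.Injective vmap
  pverts : H.E → List G.V
  pedges : H.E → List G.E
  is_path : ∀ f : H.E, ∃ x y : H.V, H.ends f = s(x, y) ∧
    G.IsPathBetween (vmap x) (vmap y) (pverts f) (pedges f)
  edge_disjoint : ∀ f f' : H.E, f ≠ f' → ∀ e, e ∈ pedges f → e ∉ pedges f'

/-- `G.Immerses H`: `G` admits a weak immersion of `H`. -/
def Immerses (G H : Multigraph) : Prop := Nonempty (WeakImmersion H G)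

/-- The degree of a vertex: the number of edges incident with it. -/
noncomputable def degree (G : Multigraph) (v : G.V) : ℕ :=
  Nat.card {e : G.E // v ∈ G.ends e}

/-- The edge cut `δ(U)`: edges with exactly one endpoint in `U`. -/
def edgeCut (G : Multigraph) (U : Set G.V) : Set G.E :=
  {e | ∃ a b, G.ends e = s(a, b) ∧ a ∈ U ∧ b ∉ U}

/-- There exist `k` pairwise edge-disjoint paths from `a` to `b` in `G`. -/
def EdgeDisjointPaths (G : Multigraph) (a b : G.V) (k : ℕ) : Prop :=
  ∃ (vs : Fin k → List G.V) (es : Fin k → List G.E),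
    (∀ i, G.IsPathBetween a b (vs i) (es i)) ∧
    ∀ i j, i ≠ j → ∀ e, e ∈ es i → e ∉ es j

/-- Isomorphism of multigraphs. -/
structure Iso (G H : Multigraph) where
  vmap : G.V ≃ H.V
  emap : G.E ≃ H.E
  ends_map : ∀ e, H.ends (emap e) = Sym2.map vmap (G.ends e)

/-- The complete graph `K_t` as a multigraph. -/
def completeGraph (t : ℕ) : Multigraph where
  V := Fin t
  E := {p : Sym2 (Fin t) // ¬ p.IsDiag}
  finV := inferInstance
  finE := inferInstance
  ends := Subtype.val
  no_loops := fun e => e.prop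

/-- The multigraph `S_{k,n}`: vertices `x_1, …, x_n, y` (with `y = none`) and `k`
parallel edges from each `x_i` to `y`. -/
def star (k n : ℕ) : Multigraph where
  V := Option (Fin n)
  E := Fin n × Fin k
  finV := inferInstance
  finE := inferInstance
  ends := fun p => s(some p.1, none)
  no_loops := fun p => by simp [Sym2.mk_isDiag_iff]

/-! ### Edge sums -/

/-- A witness that `G` is a `k`-edge sum of `G₁` and `G₂`. -/
structure EdgeSumWitness (k : ℕ) (G G₁ G₂ : Multigraph) where
  v₁ : G₁.V
  v₂ : G₂.V
  deg₁ : G₁.degree v₁ = k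
  deg₂ : G₂.degree v₂ = k
  π : {e : G₁.E // v₁ ∈ G₁.ends e} ≃ {e : G₂.E // v₂ ∈ G₂.ends e}
  α : G.V ≃ {x : G₁.V // x ≠ v₁} ⊕ {y : G₂.V // y ≠ v₂}
  β : G.E ≃ ({e : G₁.E // v₁ ∉ G₁.ends e} ⊕ {e : G₂.E // v₂ ∉ G₂.ends e}) ⊕
      {e : G₁.E // v₁ ∈ G₁.ends e}
  ends₁ : ∀ (e : {e : G₁.E // v₁ ∉ G₁.ends e}) (x y : G₁.V) (hx : x ≠ v₁) (hy : y ≠ v₁),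
    G₁.ends e.val = s(x, y) →
      G.ends (β.symm (Sum.inl (Sum.inl e))) = s(α.symm (Sum.inl ⟨x, hx⟩), α.symm (Sum.inl ⟨y, hy⟩))
  ends₂ : ∀ (e : {e : G₂.E // v₂ ∉ G₂.ends e}) (x y : G₂.V) (hx : x ≠ v₂) (hy : y ≠ v₂),
    G₂.ends e.val = s(x, y) →
      G.ends (β.symm (Sum.inl (Sum.inr e))) = s(α.symm (Sum.inr ⟨x, hx⟩), α.symm (Sum.inr ⟨y, hy⟩))
  ends₃ : ∀ (e : {e : G₁.E // v₁ ∈ G₁.ends e}) (x : G₁.V) (y : G₂.V) (hx : x ≠ v₁) (hy : y ≠ v₂),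
    G₁.ends e.val = s(x, v₁) → G₂.ends (π e).val = s(y, v₂) →
      G.ends (β.symm (Sum.inr e)) = s(α.symm (Sum.inl ⟨x, hx⟩), α.symm (Sum.inr ⟨y, hy⟩))

/-- `G` is a `k`-edge sum of `G₁` and `G₂`. -/
def IsEdgeSum (k : ℕ) (G G₁ G₂ : Multigraph) : Prop :=
  Nonempty (EdgeSumWitness k G G₁ G₂)

/-- The edge sum is grounded. -/
def EdgeSumWitness.Grounded {k : ℕ} {G G₁ G₂ : Multigraph}
    (w : EdgeSumWitness k G G₁ G₂) : Prop :=
  (∃ v', v' ≠ w.v₁ ∧ G₁.EdgeDisjointPaths w.v₁ v' k) ∧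
  (∃ v', v' ≠ w.v₂ ∧ G₂.EdgeDisjointPaths w.v₂ v' k)

/-- `G` is a grounded `k`-edge sum of `G₁` and `G₂`. -/
def IsGroundedEdgeSum (k : ℕ) (G G₁ G₂ : Multigraph) : Prop :=
  ∃ w : EdgeSumWitness k G G₁ G₂, w.Grounded

/-! ### Auxiliary simple-graph operations -/

/-- Delete the vertex `t` from `T` (keeping it as an isolated vertex). -/
def delAt {τ : Type} (T : SimpleGraph τ) (t : τ) : SimpleGraph τ where
  Adj a b := T.Adj a b ∧ a ≠ t ∧ b ≠ t
  symm := ⟨fun a b h => ⟨h.1.symm, h.2.2, h.2.1⟩⟩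
  loopless := ⟨fun a h => T.loopless.irrefl a h.1⟩

lemma reach_delAt {τ : Type} (T : SimpleGraph τ) (t : τ) {a b : τ} (q : T.Walk a b)
    (ht : t ∉ q.support) : (delAt T t).Reachable a b := by
  induction q with
  | nil => exact SimpleGraph.Reachable.refl _
  | @cons u v w h p ih =>
      simp only [SimpleGraph.Walk.support_cons, List.mem_cons] at ht
      push_neg at ht
      have hv : v ≠ t := fun hv => ht.2 (hv ▸ p.start_mem_support)
      exact (SimpleGraph.Adj.reachable (G := delAt T t) (u := u) (v := v) ⟨h, Ne.symm ht.1, hv⟩).trans (ih ht.2)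

/-! ### Tree-cut decompositions -/

/-- A tree-cut decomposition of the multigraph `G`. -/
structure TreeCutDecomp (G : Multigraph) where
  T : Type
  finT : Finite T
  tree : SimpleGraph T
  isTree : tree.IsTree
  bag : T → Set G.V
  disj : ∀ s t : T, s ≠ t → Disjoint (bag s) (bag t)
  covers : ∀ v : G.V, ∃ t : T, v ∈ bag t

attribute [instance] TreeCutDecomp.finT

variable {G : Multigraph}

/-- The union of the bags on the `v`-side of the tree edge `uv`. -/
def TreeCutDecomp.sideSet (D : TreeCutDecomp G) (u v : D.T) : Set G.V :=
  {x | ∃ s, (D.tree.deleteEdges {s(u, v)}).Reachable v s ∧ x ∈ D.bag s}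

/-- The adhesion of a tree-cut decomposition. -/
noncomputable def TreeCutDecomp.adhesion (D : TreeCutDecomp G) : ℕ :=
  sSup {n | ∃ u v : D.T, D.tree.Adj u v ∧ n = (G.edgeCut (D.sideSet u v)).ncard}

lemma TreeCutDecomp.exists_periph (D : TreeCutDecomp G) (t : D.T) (v : G.V)
    (hv : v ∉ D.bag t) :
    ∃ u : D.T, D.tree.Adj t u ∧ ∃ s, v ∈ D.bag s ∧ (delAt D.tree t).Reachable s u := by
  classical
  obtain ⟨s, hs⟩ := D.covers v
  have hst : t ≠ s := fun h => hv (h ▸ hs)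
  obtain ⟨w⟩ := D.isTree.isConnected.preconnected t s
  obtain ⟨x, hadj, q, hq⟩ := SimpleGraph.Walk.exists_eq_cons_of_ne hst w.toPath.val
  have hP : (SimpleGraph.Walk.cons hadj q).IsPath := hq ▸ w.toPath.prop
  rw [SimpleGraph.Walk.cons_isPath_iff] at hP
  exact ⟨x, hadj, s, hs, (reach_delAt D.tree t q hP.2).symm⟩

open Classical in
/-- The map from `G` to the vertices of the torso at `t`. -/
noncomputable def TreeCutDecomp.proj (D : TreeCutDecomp G) (t : D.T) (v : G.V) :
    ↥(D.bag t) ⊕ {u : D.T // D.tree.Adj t u} :=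
  if hv : v ∈ D.bag t then Sum.inl ⟨v, hv⟩
  else Sum.inr ⟨(D.exists_periph t v hv).choose, (D.exists_periph t v hv).choose_spec.1⟩

/-- The torso of `G` at a node `t` of a tree-cut decomposition. -/
noncomputable def TreeCutDecomp.torso (D : TreeCutDecomp G) (t : D.T) : Multigraph where
  V := ↥(D.bag t) ⊕ {u : D.T // D.tree.Adj t u}
  E := {e : G.E // ¬ (Sym2.map (D.proj t) (G.ends e)).IsDiag}
  finV := inferInstance
  finE := inferInstance
  ends := fun e => Sym2.map (D.proj t) (G.ends e.val)
  no_loops := fun e => e.prop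

/-- The core vertices of the torso at `t`. -/
def TreeCutDecomp.torsoCore (D : TreeCutDecomp G) (t : D.T) : Set (D.torso t).V :=
  Set.range Sum.inl

/-! ### The 3-center and tree-cut width -/

/-- Condition (1): the immersion of `H` in `G` covers `X` and every vertex of `H`
of degree at most two is mapped into `X`. -/
def CenterCond (G : Multigraph) (X : Set G.V) (H : Multigraph) (I : WeakImmersion H G) : Prop :=
  X ⊆ Set.range I.vmap ∧ ∀ x : H.V, H.degree x ≤ 2 → I.vmap x ∈ X

/-- `C` is a 3-center of `(G, X)`: it admits an immersion in `G` satisfying (1) and is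
maximal with respect to immersion containment among all such graphs. -/
def IsThreeCenter (G : Multigraph) (X : Set G.V) (C : Multigraph) : Prop :=
  (∃ I : WeakImmersion C G, CenterCond G X C I) ∧
  ∀ H : Multigraph, (∃ I : WeakImmersion H G, CenterCond G X H I) → C.Immerses H

/-- The number of vertices of the 3-center of `(G, X)`. -/
noncomputable def threeCenterCard (G : Multigraph) (X : Set G.V) : ℕ :=
  sSup {n | ∃ C : Multigraph, IsThreeCenter G X C ∧ Nat.card C.V = n}

/-- The width of a tree-cut decomposition. -/
noncomputable def TreeCutDecomp.width (D : TreeCutDecomp G) : ℕ :=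
  max D.adhesion (sSup {n | ∃ t : D.T, n = threeCenterCard (D.torso t) (D.torsoCore t)})

/-- The tree-cut width of a multigraph. -/
noncomputable def tcw (G : Multigraph) : ℕ :=
  sInf {w | ∃ D : TreeCutDecomp G, D.width = w}

/-! ### Tree decompositions and tree-width -/

/-- A tree decomposition of the multigraph `G`. -/
structure TreeDecomp (G : Multigraph) where
  T : Type
  finT : Finite T
  tree : SimpleGraph T
  isTree : tree.IsTree
  bag : T → Set G.V
  covers_v : ∀ v : G.V, ∃ t : T, v ∈ bag t
  covers_e : ∀ e : G.E, ∃ (t : T) (x y : G.V), G.ends e = s(x, y) ∧ x ∈ bag t ∧ y ∈ bag t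
  connected : ∀ v : G.V, (SimpleGraph.induce {t : T | v ∈ bag t} tree).Connected

/-- The tree-width of a multigraph. -/
noncomputable def treewidth (G : Multigraph) : ℕ :=
  sInf {n | ∃ D : TreeDecomp G, ∀ t : D.T, (D.bag t).ncard ≤ n + 1}

/-! ### Walls and grids -/

def wallStep (r : ℕ) (a b : Fin r × Fin r) : Prop :=
  (a.1 = b.1 ∧ a.2.val + 1 = b.2.val) ∨
  (a.2 = b.2 ∧ a.1.val + 1 = b.1.val ∧ (a.1.val + 1) % 2 = (a.2.val + 1) % 2)

def wallAdj (r : ℕ) (a b : Fin r × Fin r) : Prop := wallStep r a b ∨ wallStep r b a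

lemma wallStep_ne {r : ℕ} {a b : Fin r × Fin r} (h : wallStep r a b) : a ≠ b := by
  rintro rfl
  rcases h with ⟨-, h⟩ | ⟨-, h, -⟩ <;> omega

/-- The `r`-wall `H_r`. -/
def wall (r : ℕ) : Multigraph where
  V := Fin r × Fin r
  E := {q : Sym2 (Fin r × Fin r) // ∃ a b, q = s(a, b) ∧ wallAdj r a b}
  finV := inferInstance
  finE := inferInstance
  ends := Subtype.val
  no_loops := by
    rintro ⟨q, a, b, rfl, hab⟩ hd
    rw [Sym2.mk_isDiag_iff] at hd
    subst hd
    rcases hab with h | h <;> exact wallStep_ne h rfl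

def gridStep (r : ℕ) (a b : Fin r × Fin r) : Prop :=
  (a.1 = b.1 ∧ a.2.val + 1 = b.2.val) ∨ (a.2 = b.2 ∧ a.1.val + 1 = b.1.val)

def gridAdj (r : ℕ) (a b : Fin r × Fin r) : Prop := gridStep r a b ∨ gridStep r b a

lemma gridStep_ne {r : ℕ} {a b : Fin r × Fin r} (h : gridStep r a b) : a ≠ b := by
  rintro rfl
  rcases h with ⟨-, h⟩ | ⟨-, h⟩ <;> omega

/-- The `r × r` grid. -/
def grid (r : ℕ) : Multigraph where
  V := Fin r × Fin r
  E := {q : Sym2 (Fin r × Fin r) // ∃ a b, q = s(a, b) ∧ gridAdj r a b}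
  finV := inferInstance
  finE := inferInstance
  ends := Subtype.val
  no_loops := by
    rintro ⟨q, a, b, rfl, hab⟩ hd
    rw [Sym2.mk_isDiag_iff] at hd
    subst hd
    rcases hab with h | h <;> exact gridStep_ne h rfl

/-! ### Subdivisions and minors -/

/-- `G` contains `H` as a subdivision: an immersion whose composite paths pairwise
meet only in common endpoints. -/
def ContainsSubdivision (G H : Multigraph) : Prop :=
  ∃ I : WeakImmersion H G, ∀ f f' : H.E, f ≠ f' → ∀ v : G.V,
    v ∈ I.pverts f → v ∈ I.pverts f' →
      ((I.pverts f).head? = some v ∨ (I.pverts f).getLast? = some v) ∧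
      ((I.pverts f').head? = some v ∨ (I.pverts f').getLast? = some v)

/-- A set of vertices is connected in `G`. -/
def ConnectedIn (G : Multigraph) (B : Set G.V) : Prop :=
  B.Nonempty ∧ ∀ a ∈ B, ∀ b ∈ B, ∃ (vs : List G.V) (es : List G.E),
    G.IsWalk vs es ∧ vs.head? = some a ∧ vs.getLast? = some b ∧ ∀ v ∈ vs, v ∈ B

/-- `G` contains `H` as a minor. -/
def HasMinor (G H : Multigraph) : Prop :=
  ∃ B : H.V → Set G.V,
    (∀ x, G.ConnectedIn (B x)) ∧
    (∀ x y, x ≠ y → Disjoint (B x) (B y)) ∧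
    ∃ η : H.E → G.E, Function.Injective η ∧
      ∀ (f : H.E) (x y : H.V), H.ends f = s(x, y) →
        ∃ a b, G.ends (η f) = s(a, b) ∧ a ∈ B x ∧ b ∈ B y

/-! ### Subgraphs, splitting off, suppression -/

/-- `A` is (isomorphic to) a subgraph of `G`. -/
def IsSubgraph (A G : Multigraph) : Prop :=
  ∃ (fv : A.V → G.V) (fe : A.E → G.E), Function.Injective fv ∧ Function.Injective fe ∧
    ∀ e, G.ends (fe e) = Sym2.map fv (A.ends e)

/-- `B` is obtained from `A` by splitting off a pair of incident edges. -/
def SplitOffRel (A B : Multigraph) : Prop :=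
  ∃ (e₁ e₂ : A.E) (x y z : A.V), e₁ ≠ e₂ ∧ x ≠ z ∧
    A.ends e₁ = s(x, y) ∧ A.ends e₂ = s(y, z) ∧
    ∃ (fV : A.V ≃ B.V) (fE : {e : A.E // e ≠ e₁ ∧ e ≠ e₂} ⊕ Unit ≃ B.E),
      (∀ e : {e : A.E // e ≠ e₁ ∧ e ≠ e₂},
        B.ends (fE (Sum.inl e)) = Sym2.map fV (A.ends e.val)) ∧
      B.ends (fE (Sum.inr ())) = s(fV x, fV z)

/-- `B` is obtained from `A` by suppressing a vertex of degree two (contracting one of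
its incident edges and deleting any resulting loops). -/
def SuppressTwoRel (A B : Multigraph) : Prop :=
  ∃ v : A.V, A.degree v = 2 ∧
    ∃ σ : A.V → B.V,
      (∀ x y, x ≠ v → y ≠ v → (σ x = σ y ↔ x = y)) ∧
      (∀ y : B.V, ∃ x, x ≠ v ∧ σ x = y) ∧
      (∃ a, a ≠ v ∧ (∃ e, A.ends e = s(v, a)) ∧ σ v = σ a) ∧
      ∃ τ : {e : A.E // ¬ (Sym2.map σ (A.ends e)).IsDiag} ≃ B.E,
        ∀ e, B.ends (τ e) = Sym2.map σ (A.ends e.val)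

/-- A multigraph together with a marked set of vertices. -/
structure MarkedGraph where
  G : Multigraph
  X : Set G.V

/-- One step of suppressing a vertex outside the marked set of degree at most two
(for degree zero this deletes the vertex). -/
def SuppressStep (A B : MarkedGraph) : Prop :=
  ∃ v : A.G.V, v ∉ A.X ∧ A.G.degree v ≤ 2 ∧
    ∃ σ : A.G.V → B.G.V,
      (∀ x y, x ≠ v → y ≠ v → (σ x = σ y ↔ x = y)) ∧
      (∀ y : B.G.V, ∃ x, x ≠ v ∧ σ x = y) ∧
      B.X = {y | ∃ x, x ∈ A.X ∧ σ x = y} ∧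
      (1 ≤ A.G.degree v → ∃ a, a ≠ v ∧ (∃ e, A.G.ends e = s(v, a)) ∧ σ v = σ a) ∧
      ∃ τ : {e : A.G.E // ¬ (Sym2.map σ (A.G.ends e)).IsDiag} ≃ B.G.E,
        ∀ e, B.G.ends (τ e) = Sym2.map σ (A.G.ends e.val)

/-! ### Trees and cycles as multigraphs -/

/-- A multigraph is a tree if it corresponds to a simple tree on its vertex set. -/
def IsTreeGraph (G : Multigraph) : Prop :=
  ∃ S : SimpleGraph G.V, S.IsTree ∧ ∃ φ : G.E ≃ S.edgeSet, ∀ e, (φ e : Sym2 G.V) = G.ends e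

/-- The cycle on `n + 3` vertices. -/
def cycleGraph (n : ℕ) : Multigraph where
  V := Fin (n + 3)
  E := Fin (n + 3)
  finV := inferInstance
  finE := inferInstance
  ends := fun i => s(i, i + 1)
  no_loops := by
    intro i hd
    rw [Sym2.mk_isDiag_iff] at hd
    have h1 : (i : Fin (n + 3)) + 0 = i + 1 := by simpa using hd
    have h01 : (0 : Fin (n + 3)) = 1 := add_left_cancel h1
    have := congrArg Fin.val h01
    simp [Fin.val_one] at this

/-- A matching in a multigraph: a set of pairwise vertex-disjoint edges. -/
def IsMatching (G : Multigraph) (M : Set G.E) : Prop :=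
  ∀ e ∈ M, ∀ e' ∈ M, e ≠ e' → ∀ v : G.V, v ∈ G.ends e → v ∉ G.ends e'

/-! ### Auxiliary walk lemmas -/

variable {G : Multigraph}

lemma IsWalk.ne_nil {vs : List G.V} {es : List G.E} (h : G.IsWalk vs es) : vs ≠ [] := by
  cases h <;> simp

lemma IsWalk.append {vs₁ vs₂ : List G.V} {es₁ es₂ : List G.E} {m : G.V}
    (h₁ : G.IsWalk vs₁ es₁) (h₂ : G.IsWalk (m :: vs₂) es₂)
    (hm : vs₁.getLast? = some m) : G.IsWalk (vs₁ ++ vs₂) (es₁ ++ es₂) := by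
  induction h₁ with
  | nil v =>
      simp only [List.getLast?_singleton, Option.some.injEq] at hm
      subst hm; simpa using h₂
  | @cons v vs es u e he hw ih =>
      have hm' : (v :: vs).getLast? = some m := by
        rwa [List.getLast?_cons_cons] at hm
      exact IsWalk.cons u e he (ih hm')

lemma IsWalk.reverse {vs : List G.V} {es : List G.E} (h : G.IsWalk vs es) :
    G.IsWalk vs.reverse es.reverse := by
  induction h with
  | nil v => simpa using IsWalk.nil v
  | @cons v vs es u e he hw ih =>
      have he' : G.ends e = s(v, u) := by rw [he, Sym2.eq_swap]
      have h2 : G.IsWalk [v, u] [e] := IsWalk.cons v e he' (IsWalk.nil u)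
      have hlast : (v :: vs).reverse.getLast? = some v := by
        rw [List.getLast?_reverse]; rfl
      have := ih.append h2 hlast
      simpa using this

/-- Composite of two walks sharing an endpoint. -/
lemma IsWalk.trans {vs₁ vs₂ : List G.V} {es₁ es₂ : List G.E} {m : G.V}
    (h₁ : G.IsWalk vs₁ es₁) (h₂ : G.IsWalk vs₂ es₂)
    (hm₁ : vs₁.getLast? = some m) (hm₂ : vs₂.head? = some m) :
    ∃ vs es, G.IsWalk vs es ∧ vs.head? = vs₁.head? ∧ vs.getLast? = vs₂.getLast? ∧
      ∀ e ∈ es, e ∈ es₁ ∨ e ∈ es₂ := by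
  obtain ⟨t, rfl⟩ : ∃ t, vs₂ = m :: t := by
    cases vs₂ with
    | nil => simp at hm₂
    | cons a t => simp only [List.head?_cons, Option.some.injEq] at hm₂; exact ⟨t, by rw [hm₂]⟩
  refine ⟨vs₁ ++ t, es₁ ++ es₂, h₁.append h₂ hm₁, ?_, ?_, fun e he => by
    simpa using List.mem_append.1 he⟩
  · cases vs₁ with
    | nil => exact absurd rfl h₁.ne_nil
    | cons a l => simp
  · cases t with
    | nil => simpa using hm₁
    | cons b t' =>
        rw [List.getLast?_cons_cons, List.getLast?_append_of_ne_nil _ (by simp : (b :: t' : List G.V) ≠ [])]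

lemma IsWalk.edge_mem {vs : List G.V} {es : List G.E} (h : G.IsWalk vs es)
    {e : G.E} (he : e ∈ es) : ∃ a b, G.ends e = s(a, b) ∧ a ∈ vs ∧ b ∈ vs := by
  induction h with
  | nil v => simp at he
  | @cons v vs es u e' he' hw ih =>
      rcases List.mem_cons.1 he with rfl | hmem
      · exact ⟨u, v, he', by simp, by simp⟩
      · obtain ⟨a, b, h1, h2, h3⟩ := ih hmem
        exact ⟨a, b, h1, by simp [h2], by simp [h3]⟩

lemma IsWalk.suffix_from {vs : List G.V} {es : List G.E} (h : G.IsWalk vs es)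
    {u : G.V} (hu : u ∈ vs) :
    ∃ vs' es', G.IsWalk vs' es' ∧ vs'.head? = some u ∧ vs'.getLast? = vs.getLast? ∧
      vs'.length ≤ vs.length ∧ (∀ x ∈ vs', x ∈ vs) ∧ ∀ e ∈ es', e ∈ es := by
  induction h with
  | nil v =>
      simp only [List.mem_singleton] at hu
      subst hu
      exact ⟨[u], [], IsWalk.nil u, rfl, rfl, le_rfl, fun x hx => hx, by simp⟩
  | @cons v vs es u₀ e he hw ih =>
      rcases List.mem_cons.1 hu with rfl | hmem
      · exact ⟨u :: v :: vs, e :: es, IsWalk.cons u e he hw, rfl, rfl, le_rfl,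
          fun x hx => hx, fun _ hx => hx⟩
      · obtain ⟨vs', es', h1, h2, h3, h4, h5, h6⟩ := ih hmem
        refine ⟨vs', es', h1, h2, ?_, ?_, fun x hx => by simp [h5 x hx], fun e' he' =>
          by simp [h6 e' he']⟩
        · rw [h3, List.getLast?_cons_cons]
        · exact h4.trans (by simp)

lemma IsWalk.first_edge {vs : List G.V} {es : List G.E} (h : G.IsWalk vs es)
    {a b : G.V} (hh : vs.head? = some a) (hl : vs.getLast? = some b) (hab : a ≠ b) :
    ∃ e es' u vs', es = e :: es' ∧ vs = a :: u :: vs' ∧ G.ends e = s(a, u) ∧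
      G.IsWalk (u :: vs') es' := by
  cases h with
  | nil v =>
      simp only [List.head?_cons, Option.some.injEq] at hh
      simp only [List.getLast?_singleton, Option.some.injEq] at hl
      exact absurd (hh ▸ hl : a = b) hab
  | @cons v vs es u e he hw =>
      simp only [List.head?_cons, Option.some.injEq] at hh
      subst hh
      exact ⟨e, es, v, vs, rfl, rfl, he, hw⟩

lemma pathify_aux : ∀ (n : ℕ) (vs : List G.V) (es : List G.E), vs.length ≤ n →
    G.IsWalk vs es →
    ∃ vs' es', G.IsWalk vs' es' ∧ vs'.Nodup ∧ vs'.head? = vs.head? ∧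
      vs'.getLast? = vs.getLast? ∧ (∀ x ∈ vs', x ∈ vs) ∧ ∀ e ∈ es', e ∈ es := by
  intro n
  induction n with
  | zero =>
      intro vs es hlen hw
      exact absurd (List.length_eq_zero_iff.1 (Nat.le_zero.1 hlen)) hw.ne_nil
  | succ n ih =>
      intro vs es hlen hw
      cases hw with
      | nil v =>
          exact ⟨[v], [], IsWalk.nil v, by simp, rfl, rfl, fun x hx => hx, by simp⟩
      | @cons v vs' es' u e he hw' =>
          by_cases hu : u ∈ v :: vs'
          · obtain ⟨vs₂, es₂, h1, h2, h3, h4, h5, h6⟩ := hw'.suffix_from hu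
            have hlen2 : vs₂.length ≤ n := by
              simp only [List.length_cons] at hlen
              have := h4; simp only [List.length_cons] at this; omega
            obtain ⟨vs₃, es₃, g1, g2, g3, g4, g5, g6⟩ := ih vs₂ es₂ hlen2 h1
            refine ⟨vs₃, es₃, g1, g2, by rw [g3, h2]; rfl, ?_, ?_, ?_⟩
            · rw [g4, h3, List.getLast?_cons_cons]
            · intro x hx
              have := h5 x (g5 x hx); simp [this]
            · intro e' he'
              have := h6 e' (g6 e' he'); simp [this]
          · have hlen' : (v :: vs').length ≤ n := by
              simp only [List.length_cons] at hlen ⊢; omega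
            obtain ⟨vs₂, es₂, h1, h2, h3, h4, h5, h6⟩ := ih (v :: vs') es' hlen' hw'
            obtain ⟨t, rfl⟩ : ∃ t, vs₂ = v :: t := by
              cases vs₂ with
              | nil => simp at h3
              | cons a t =>
                  simp only [List.head?_cons, Option.some.injEq] at h3
                  exact ⟨t, by rw [h3]⟩
            have hu2 : u ∉ v :: t := fun hmem => hu (h5 u hmem)
            refine ⟨u :: v :: t, e :: es₂, IsWalk.cons u e he h1, by simp [h2, hu2], rfl, ?_,
              ?_, ?_⟩
            · rw [List.getLast?_cons_cons, h4, List.getLast?_cons_cons]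
            · intro x hx
              rcases List.mem_cons.1 hx with rfl | hx
              · simp
              · simp [h5 x hx]
            · intro e' he'
              rcases List.mem_cons.1 he' with rfl | he'
              · simp
              · simp [h6 e' he']

/-! ### Embedding the summands into the edge sum -/

section Witness

variable {k : ℕ} {G₁ G₂ : Multigraph} (w : EdgeSumWitness k G G₁ G₂) {v₂' : G₂.V}
  (hv : v₂' ≠ w.v₂)

open Classical in
/-- Map the vertices of `G₁` into `G`, sending `v₁` to (the image of) `v₂'`. -/
noncomputable def embV (x : G₁.V) : G.V :=
  if h : x = w.v₁ then w.α.symm (.inr ⟨v₂', hv⟩) else w.α.symm (.inl ⟨x, h⟩)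

open Classical in
/-- Map the vertices of `G₂` into `G`. -/
noncomputable def embV₂ (y : G₂.V) : G.V :=
  if h : y = w.v₂ then w.α.symm (.inr ⟨v₂', hv⟩) else w.α.symm (.inr ⟨y, h⟩)

open Classical in
/-- Map the edges of `G₁` into `G`. -/
noncomputable def embE₁ (e : G₁.E) : G.E :=
  if h : w.v₁ ∈ G₁.ends e then w.β.symm (.inr ⟨e, h⟩) else w.β.symm (.inl (.inl ⟨e, h⟩))

open Classical in
/-- Map the edges of `G₂` into `G`. -/
noncomputable def embE₂ (e : G₂.E) : G.E :=
  if h : w.v₂ ∈ G₂.ends e then w.β.symm (.inr (w.π.symm ⟨e, h⟩))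
  else w.β.symm (.inl (.inr ⟨e, h⟩))

lemma embV_injective : Function.Injective (embV w hv) := by
  intro x y hxy
  unfold embV at hxy
  split_ifs at hxy with h1 h2 h2
  · rw [h1, h2]
  · exact absurd (w.α.symm.injective hxy) (by simp)
  · exact absurd (w.α.symm.injective hxy) (by simp)
  · have := w.α.symm.injective hxy
    simpa using this

lemma embV_eq_embV₂ : embV w hv w.v₁ = embV₂ w hv v₂' := by
  simp [embV, embV₂, hv]

lemma ends_embE₁ {e : G₁.E} {x y : G₁.V} (hx : x ≠ w.v₁) (hy : y ≠ w.v₁)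
    (he : G₁.ends e = s(x, y)) :
    G.ends (embE₁ w e) = s(embV w hv x, embV w hv y) := by
  have hne : w.v₁ ∉ G₁.ends e := by
    rw [he]; intro hmem
    rcases Sym2.mem_iff.1 hmem with h | h
    · exact hx h.symm
    · exact hy h.symm
  rw [embE₁, dif_neg hne, embV, dif_neg hx, embV, dif_neg hy]
  exact w.ends₁ ⟨e, hne⟩ x y hx hy he

lemma ends_embE₂ {e : G₂.E} {x y : G₂.V} (hx : x ≠ w.v₂) (hy : y ≠ w.v₂)
    (he : G₂.ends e = s(x, y)) :
    G.ends (embE₂ w e) = s(embV₂ w hv x, embV₂ w hv y) := by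
  have hne : w.v₂ ∉ G₂.ends e := by
    rw [he]; intro hmem
    rcases Sym2.mem_iff.1 hmem with h | h
    · exact hx h.symm
    · exact hy h.symm
  rw [embE₂, dif_neg hne, embV₂, dif_neg hx, embV₂, dif_neg hy]
  exact w.ends₂ ⟨e, hne⟩ x y hx hy he

lemma ends_embE₁_merged {e : G₁.E} (he : w.v₁ ∈ G₁.ends e) {x : G₁.V} {y : G₂.V}
    (hx : x ≠ w.v₁) (hy : y ≠ w.v₂) (h1 : G₁.ends e = s(x, w.v₁))
    (h2 : G₂.ends (w.π ⟨e, he⟩).val = s(y, w.v₂)) :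
    G.ends (embE₁ w e) = s(embV w hv x, embV₂ w hv y) := by
  rw [embE₁, dif_pos he, embV, dif_neg hx, embV₂, dif_neg hy]
  exact w.ends₃ ⟨e, he⟩ x y hx hy h1 h2

lemma liftWalk₁ {vs : List G₁.V} {es : List G₁.E} (h : G₁.IsWalk vs es)
    (hvs : ∀ x ∈ vs, x ≠ w.v₁) :
    G.IsWalk (vs.map (embV w hv)) (es.map (embE₁ w)) := by
  induction h with
  | nil v => exact IsWalk.nil _
  | @cons v vs es u e he hw ih =>
      have hu : u ≠ w.v₁ := hvs u (by simp)
      have hvv : v ≠ w.v₁ := hvs v (by simp)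
      have := ih (fun x hx => hvs x (by simp [hx]))
      exact IsWalk.cons _ _ (ends_embE₁ w hv hu hvv he) this

lemma liftWalk₂ {vs : List G₂.V} {es : List G₂.E} (h : G₂.IsWalk vs es)
    (hvs : ∀ x ∈ vs, x ≠ w.v₂) :
    G.IsWalk (vs.map (embV₂ w hv)) (es.map (embE₂ w)) := by
  induction h with
  | nil v => exact IsWalk.nil _
  | @cons v vs es u e he hw ih =>
      have hu : u ≠ w.v₂ := hvs u (by simp)
      have hvv : v ≠ w.v₂ := hvs v (by simp)
      have := ih (fun x hx => hvs x (by simp [hx]))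
      exact IsWalk.cons _ _ (ends_embE₂ w hv hu hvv he) this

lemma embE₁_injective : Function.Injective (embE₁ (G := G) w) := by
  intro a b hab
  unfold embE₁ at hab
  split_ifs at hab with h1 h2 h2 <;>
    first
      | (have := w.β.symm.injective hab; simpa using this)
      | (exact absurd (w.β.symm.injective hab) (by simp))

lemma embE₂_inj_off {q q' : G₂.E} (hq : w.v₂ ∉ G₂.ends q) (hq' : w.v₂ ∉ G₂.ends q')
    (h : embE₂ (G := G) w q = embE₂ w q') : q = q' := by
  rw [embE₂, dif_neg hq, embE₂, dif_neg hq'] at h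
  have := w.β.symm.injective h
  simpa using this

lemma embE₁_ne_embE₂ {e : G₁.E} {q : G₂.E} (hq : w.v₂ ∉ G₂.ends q) :
    embE₁ (G := G) w e ≠ embE₂ w q := by
  intro h
  rw [embE₂, dif_neg hq, embE₁] at h
  split_ifs at h with h1 <;> exact absurd (w.β.symm.injective h) (by simp)

variable (Qe : {e : G₂.E // w.v₂ ∈ G₂.ends e} → List G₂.E)

/-- Classification of the edges used by the lifted walks. -/
def ClassE (pe : List G₁.E) (e' : G.E) : Prop :=
  ∃ e ∈ pe, e' = embE₁ (G := G) w e ∨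
    ∃ (h : w.v₁ ∈ G₁.ends e) (q : G₂.E),
      q ∈ Qe (w.π ⟨e, h⟩) ∧ w.v₂ ∉ G₂.ends q ∧ e' = embE₂ w q

lemma ClassE.mono {pe pe' : List G₁.E} (hsub : ∀ e ∈ pe, e ∈ pe') {e' : G.E}
    (h : ClassE w Qe pe e') : ClassE w Qe pe' e' := by
  obtain ⟨e, he, hc⟩ := h
  exact ⟨e, hsub e he, hc⟩

/-- The hypothesis bundle for the rerouting walks in `G₂`. -/
def QSpec (b : G₂.V) (Qv : {e : G₂.E // w.v₂ ∈ G₂.ends e} → List G₂.V) : Prop :=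
  ∀ g, G₂.IsWalk (Qv g) (Qe g) ∧
    (∃ u, G₂.ends g.val = s(w.v₂, u) ∧ (Qv g).head? = some u) ∧
    (Qv g).getLast? = some b ∧ (∀ x ∈ Qv g, x ≠ w.v₂)

variable {Qv : {e : G₂.E // w.v₂ ∈ G₂.ends e} → List G₂.V}

lemma QSpec.not_mem_ends {g} (hQ : QSpec w Qe v₂' Qv) {q : G₂.E} (hq : q ∈ Qe g) :
    w.v₂ ∉ G₂.ends q := by
  obtain ⟨hwk, _, _, hne⟩ := hQ g
  intro hmem
  obtain ⟨a, b, hab, ha, hb⟩ := hwk.edge_mem hq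
  rw [hab] at hmem
  rcases Sym2.mem_iff.1 hmem with h | h
  · exact hne a ha h.symm
  · exact hne b hb h.symm

lemma liftFromV₁ (hQ : QSpec w Qe v₂' Qv) {t : List G₁.V} {es : List G₁.E}
    (hw : G₁.IsWalk (w.v₁ :: t) es) (ht : ∀ x ∈ t, x ≠ w.v₁) :
    ∃ vs' es', G.IsWalk vs' es' ∧ vs'.head? = some (embV w hv w.v₁) ∧
      vs'.getLast? = ((w.v₁ :: t).getLast?).map (embV w hv) ∧
      ∀ e' ∈ es', ClassE w Qe es e' := by
  cases t with
  | nil =>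
      cases hw with
      | nil =>
          exact ⟨[embV w hv w.v₁], [], IsWalk.nil _, rfl, rfl, by simp⟩
  | cons u rest =>
      cases hw with
      | cons _ e he hw' =>
          rename_i es₃
          have he' : w.v₁ ∈ G₁.ends e := by rw [he]; exact Sym2.mem_mk_left _ _
          set g : {e : G₂.E // w.v₂ ∈ G₂.ends e} := w.π ⟨e, he'⟩ with hg
          obtain ⟨hwk, ⟨u₂, hgu, hhead⟩, hlast, hnev₂⟩ := hQ g
          have hu₂mem : u₂ ∈ Qv g := List.mem_of_mem_head? (hhead ▸ rfl)
          have hu₂ : u₂ ≠ w.v₂ := hnev₂ u₂ hu₂mem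
          have hu : u ≠ w.v₁ := ht u (by simp)
          -- the reversed lifted Q-walk, from (the image of) v₂' to u₂
          have hQwalk := (liftWalk₂ w hv hwk hnev₂).reverse
          -- the merged edge followed by the lifted tail walk in G₁
          have hmerge : G.ends (embE₁ w e) = s(embV₂ w hv u₂, embV w hv u) := by
            rw [Sym2.eq_swap]
            exact ends_embE₁_merged w hv he' hu hu₂ (by rw [he, Sym2.eq_swap])
              (by rw [← hg, hgu, Sym2.eq_swap])
          have htail : G.IsWalk (embV w hv u :: rest.map (embV w hv))
              (es₃.map (embE₁ w)) := by
            have := liftWalk₁ w hv hw' ht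
            simpa using this
          have hwalk₂ : G.IsWalk (embV₂ w hv u₂ :: embV w hv u :: rest.map (embV w hv))
              (embE₁ w e :: es₃.map (embE₁ w)) := IsWalk.cons _ _ hmerge htail
          have hm₁ : ((Qv g).map (embV₂ w hv)).reverse.getLast? = some (embV₂ w hv u₂) := by
            rw [List.getLast?_reverse, List.head?_map, hhead]; rfl
          obtain ⟨vs', es', hwk', hh', hl', hcls⟩ :=
            hQwalk.trans hwalk₂ hm₁ rfl
          refine ⟨vs', es', hwk', ?_, ?_, ?_⟩
          · rw [hh', List.head?_reverse, List.getLast?_map, hlast]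
            simp [embV_eq_embV₂ w hv]
          · rw [hl', List.getLast?_cons_cons, List.getLast?_cons_cons]
            cases rest with
            | nil => simp
            | cons b l => rw [← List.map_cons, List.getLast?_map]
          · intro e' he₂
            rcases hcls e' he₂ with hmem | hmem
            · rw [List.mem_reverse, List.mem_map] at hmem
              obtain ⟨q, hq, rfl⟩ := hmem
              exact ⟨e, by simp, Or.inr ⟨he', q, hq, hQ.not_mem_ends w Qe hq, rfl⟩⟩
            · rcases List.mem_cons.1 hmem with rfl | hmem
              · exact ⟨e, by simp, Or.inl rfl⟩
              · rw [List.mem_map] at hmem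
                obtain ⟨e₀, he₀, rfl⟩ := hmem
                exact ⟨e₀, by simp [he₀], Or.inl rfl⟩

lemma IsWalk.split {G : Multigraph} {vs : List G.V} {es : List G.E} (h : G.IsWalk vs es)
    {vs₁ : List G.V} {v : G.V} {vs₂ : List G.V} (hvs : vs = vs₁ ++ v :: vs₂) :
    ∃ es₁ es₂, es = es₁ ++ es₂ ∧ G.IsWalk (vs₁ ++ [v]) es₁ ∧ G.IsWalk (v :: vs₂) es₂ := by
  induction h generalizing vs₁ v vs₂ with
  | nil v₀ =>
      cases vs₁ with
      | nil =>
          simp only [List.nil_append, List.cons.injEq] at hvs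
          obtain ⟨rfl, h2⟩ := hvs
          cases vs₂ with
          | nil => exact ⟨[], [], rfl, IsWalk.nil _, IsWalk.nil _⟩
          | cons a l => simp at h2
      | cons a l =>
          simp only [List.cons_append, List.cons.injEq] at hvs
          exact absurd hvs.2 (by simp)
  | @cons v₀ vs₀ es₀ u e he hw ih =>
      cases vs₁ with
      | nil =>
          simp only [List.nil_append, List.cons.injEq] at hvs
          obtain ⟨rfl, rfl⟩ := hvs
          exact ⟨[], e :: es₀, rfl, IsWalk.nil _, IsWalk.cons _ _ he hw⟩
      | cons a l =>
          simp only [List.cons_append, List.cons.injEq] at hvs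
          obtain ⟨rfl, hvs'⟩ := hvs
          obtain ⟨es₁, es₂, rfl, hW₁, hW₂⟩ := ih hvs'
          refine ⟨e :: es₁, es₂, rfl, ?_, hW₂⟩
          have hhd : (l ++ [v]).head? = some v₀ := by
            cases l with
            | nil =>
                simp only [List.nil_append] at hvs' ⊢
                simp only [List.nil_append, List.cons.injEq] at hvs'
                simp [hvs'.1]
            | cons b l' =>
                simp only [List.cons_append, List.cons.injEq] at hvs'
                simp [hvs'.1]
          obtain ⟨tl, htl⟩ : ∃ tl, l ++ [v] = v₀ :: tl := by
            cases hl : l ++ [v] with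
            | nil => simp at hl
            | cons c tl =>
                rw [hl] at hhd
                simp only [List.head?_cons, Option.some.injEq] at hhd
                exact ⟨tl, by rw [hhd]⟩
          rw [List.cons_append, htl]
          rw [htl] at hW₁
          exact IsWalk.cons _ _ he hW₁

lemma liftPath (hQ : QSpec w Qe v₂' Qv) {vs : List G₁.V} {es : List G₁.E}
    (hw : G₁.IsWalk vs es) (hnd : vs.Nodup) :
    ∃ vs' es', G.IsWalk vs' es' ∧ vs'.head? = vs.head?.map (embV w hv) ∧
      vs'.getLast? = vs.getLast?.map (embV w hv) ∧
      ∀ e' ∈ es', ClassE w Qe es e' := by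
  by_cases hv₁ : w.v₁ ∈ vs
  · obtain ⟨s, t, rfl⟩ := List.append_of_mem hv₁
    have hnds : w.v₁ ∉ s ∧ w.v₁ ∉ t := by
      rw [List.nodup_append] at hnd
      refine ⟨fun hmem => hnd.2.2 _ hmem _ (by simp) rfl, ?_⟩
      have := hnd.2.1
      rw [List.nodup_cons] at this
      exact this.1
    obtain ⟨es₁, es₂, rfl, hW₁, hW₂⟩ := hw.split rfl
    -- lift the part after v₁
    obtain ⟨vsC, esC, hC, hCh, hCl, hCcls⟩ :=
      liftFromV₁ w hv Qe hQ hW₂ (fun x hx hxe => hnds.2 (hxe ▸ hx))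
    -- lift the (reversed) part before v₁
    have hW₁' : G₁.IsWalk (w.v₁ :: s.reverse) es₁.reverse := by
      have := hW₁.reverse
      simpa using this
    obtain ⟨vsB, esB, hB, hBh, hBl, hBcls⟩ :=
      liftFromV₁ w hv Qe hQ hW₁' (fun x hx hxe => hnds.1 (hxe ▸ (by simpa using hx)))
    have hBrl : vsB.reverse.getLast? = some (embV w hv w.v₁) := by
      rw [List.getLast?_reverse, hBh]
    obtain ⟨vs', es', hwk', hh', hl', hcls⟩ := hB.reverse.trans hC hBrl hCh
    refine ⟨vs', es', hwk', ?_, ?_, ?_⟩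
    · rw [hh', List.head?_reverse, hBl]
      have h1 : (w.v₁ :: s.reverse).getLast? = (s ++ [w.v₁]).head? := by
        rw [← List.getLast?_reverse (l := s ++ [w.v₁])]
        simp
      rw [h1]
      congr 1
      cases s <;> simp
    · rw [hl', hCl]
      congr 1
      rw [List.getLast?_append_of_ne_nil _ (by simp : (w.v₁ :: t : List G₁.V) ≠ [])]
    · intro e' he'
      rcases hcls e' he' with hmem | hmem
      · rw [List.mem_reverse] at hmem
        exact (hBcls e' hmem).mono w Qe (fun e he => by
          rw [List.mem_reverse] at he; simp [he])
      · exact (hCcls e' hmem).mono w Qe (fun e he => by simp [he])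
  · refine ⟨vs.map (embV w hv), es.map (embE₁ w),
      liftWalk₁ w hv hw (fun x hx hxe => hv₁ (hxe ▸ hx)), by rw [List.head?_map],
      by rw [List.getLast?_map], ?_⟩
    intro e' he'
    rw [List.mem_map] at he'
    obtain ⟨e, he, rfl⟩ := he'
    exact ⟨e, he, Or.inl rfl⟩

end Witness

/-- The main transfer lemma: an immersion of `H` in `G₁` yields one in the edge sum,
provided the `G₂` side is grounded. -/
lemma transfer {k : ℕ} {G G₁ G₂ H : Multigraph} (w : EdgeSumWitness k G G₁ G₂)
    (hg : ∃ v', v' ≠ w.v₂ ∧ G₂.EdgeDisjointPaths w.v₂ v' k)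
    (I : WeakImmersion H G₁) : G.Immerses H := by
  classical
  obtain ⟨v₂', hv, pvs, pes, hpaths, hdisj⟩ := hg
  -- extract the first edge of each of the `k` edge-disjoint paths
  have hfirst : ∀ i : Fin k, ∃ (g : {e : G₂.E // w.v₂ ∈ G₂.ends e})
      (qv : List G₂.V) (qe : List G₂.E),
      pes i = g.val :: qe ∧ G₂.IsWalk qv qe ∧
      (∃ u, G₂.ends g.val = s(w.v₂, u) ∧ qv.head? = some u) ∧
      qv.getLast? = some v₂' ∧ (∀ x ∈ qv, x ≠ w.v₂) := by
    intro i
    obtain ⟨hwk, hnd, hhd, hlst⟩ := hpaths i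
    obtain ⟨e, es', u, vs', hes, hvs, he, hw'⟩ := hwk.first_edge hhd hlst (Ne.symm hv)
    have he' : w.v₂ ∈ G₂.ends e := by rw [he]; exact Sym2.mem_mk_left _ _
    refine ⟨⟨e, he'⟩, u :: vs', es', hes, hw', ⟨u, he, rfl⟩, ?_, ?_⟩
    · rw [hvs, List.getLast?_cons_cons] at hlst
      exact hlst
    · intro x hx hxe
      rw [hvs, List.nodup_cons] at hnd
      exact hnd.1 (hxe ▸ hx)
  choose fg fqv fqe hfe hfwk hfhd hflst hfne using hfirst
  -- `fg` is injective, hence surjective onto the edges at `v₂`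
  have hginj : Function.Injective fg := by
    intro i j hij
    by_contra hne
    refine hdisj i j hne (fg i).val (by rw [hfe i]; simp) ?_
    rw [hfe j, ← hij]; simp
  have hgsurj : Function.Surjective fg := by
    refine ((Nat.bijective_iff_injective_and_card fg).2 ⟨hginj, ?_⟩).2
    rw [Nat.card_eq_fintype_card, Fintype.card_fin]
    exact (w.deg₂).symm
  choose pick hpick using hgsurj
  set Qv : {e : G₂.E // w.v₂ ∈ G₂.ends e} → List G₂.V := fun g => fqv (pick g) with hQv
  set Qe : {e : G₂.E // w.v₂ ∈ G₂.ends e} → List G₂.E := fun g => fqe (pick g) with hQe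
  have hQ : QSpec w Qe v₂' Qv := by
    intro g
    refine ⟨hfwk _, ?_, hflst _, hfne _⟩
    obtain ⟨u, hu1, hu2⟩ := hfhd (pick g)
    exact ⟨u, by rwa [hpick g] at hu1, hu2⟩
  have hQsub : ∀ g, ∀ q ∈ Qe g, q ∈ pes (pick g) := by
    intro g q hq
    rw [hfe (pick g)]
    exact List.mem_cons_of_mem _ hq
  have hQdisj : ∀ g g', g ≠ g' → ∀ q ∈ Qe g, q ∉ Qe g' := by
    intro g g' hgg q hq hq'
    have hpp : pick g ≠ pick g' := by
      intro hp
      exact hgg (by rw [← hpick g, ← hpick g', hp])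
    exact hdisj _ _ hpp q (hQsub g q hq) (hQsub g' q hq')
  -- lift the immersion paths
  have main : ∀ f : H.E, ∃ (vs' : List G.V) (es' : List G.E) (x y : H.V),
      H.ends f = s(x, y) ∧
      G.IsPathBetween (embV w hv (I.vmap x)) (embV w hv (I.vmap y)) vs' es' ∧
      ∀ e' ∈ es', ClassE w Qe (I.pedges f) e' := by
    intro f
    obtain ⟨x, y, hxy, hwk, hnd, hhd, hlst⟩ := I.is_path f
    obtain ⟨vs', es', h1, h2, h3, h4⟩ := liftPath w hv Qe hQ hwk hnd
    obtain ⟨vs'', es'', g1, g2, g3, g4, g5, g6⟩ :=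
      pathify_aux vs'.length vs' es' le_rfl h1
    refine ⟨vs'', es'', x, y, hxy, ⟨g1, g2, ?_, ?_⟩, fun e' he' => h4 e' (g6 e' he')⟩
    · rw [g3, h2, hhd]; rfl
    · rw [g4, h3, hlst]; rfl
  choose pv pe xs ys hxy hpath hcls using main
  refine ⟨⟨fun x => embV w hv (I.vmap x), (embV_injective w hv).comp I.vmap_inj,
    pv, pe, fun f => ⟨xs f, ys f, hxy f, hpath f⟩, ?_⟩⟩
  intro f f' hff e' hef hef'
  obtain ⟨e, he, hc⟩ := hcls f e' hef
  obtain ⟨e₂, he₂, hc₂⟩ := hcls f' e' hef'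
  rcases hc with rfl | ⟨h, q, hqmem, hqne, rfl⟩
  · rcases hc₂ with heq | ⟨h₂, q₂, hq₂mem, hq₂ne, heq⟩
    · exact I.edge_disjoint f f' hff e he (embE₁_injective w heq ▸ he₂)
    · exact embE₁_ne_embE₂ w hq₂ne heq
  · rcases hc₂ with heq | ⟨h₂, q₂, hq₂mem, hq₂ne, heq⟩
    · exact embE₁_ne_embE₂ w hqne heq.symm
    · have hqq : q = q₂ := embE₂_inj_off w hqne hq₂ne (heq ▸ rfl)
      by_cases hgg : w.π ⟨e, h⟩ = w.π ⟨e₂, h₂⟩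
      · have : e = e₂ := congrArg Subtype.val (w.π.injective hgg)
        exact I.edge_disjoint f f' hff e he (this ▸ he₂)
      · exact hQdisj _ _ hgg q hqmem (hqq ▸ hq₂mem)

/-- Swapping the two sides of an edge-sum witness. -/
noncomputable def EdgeSumWitness.swap {k : ℕ} {G G₁ G₂ : Multigraph}
    (w : EdgeSumWitness k G G₁ G₂) : EdgeSumWitness k G G₂ G₁ where
  v₁ := w.v₂
  v₂ := w.v₁
  deg₁ := w.deg₂
  deg₂ := w.deg₁
  π := w.π.symm
  α := w.α.trans (Equiv.sumComm _ _)
  β := w.β.trans (Equiv.sumCongr (Equiv.sumComm _ _) w.π)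
  ends₁ := by
    intro e x y hx hy h
    have := w.ends₂ e x y hx hy h
    simpa using this
  ends₂ := by
    intro e x y hx hy h
    have := w.ends₁ e x y hx hy h
    simpa using this
  ends₃ := by
    intro e x y hx hy h1 h2
    have h1' : G₂.ends (w.π (w.π.symm e)).val = s(x, w.v₂) := by
      rw [Equiv.apply_symm_apply]; exact h1
    have := w.ends₃ (w.π.symm e) y x hy hx h2 h1'
    rw [Sym2.eq_swap] at this
    simpa using this

end Multigraph

open Multigraph in
/-- a grounded edge sum admits any weak immersion that either of the
summands admits. -/
theorem edgeSum_immerses_of_summand (k : ℕ) (hk : 1 ≤ k) (G G₁ G₂ H : Multigraph)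
    (hsum : IsGroundedEdgeSum k G G₁ G₂)
    (h : G₁.Immerses H ∨ G₂.Immerses H) : G.Immerses H := by
  obtain ⟨w, hg₁, hg₂⟩ := hsum
  rcases h with h | h
  · exact Nonempty.elim h fun I => transfer w hg₂ I
  · exact Nonempty.elim h fun I => transfer w.swap hg₁ I
end

section
/- Let G = G_1 ⊕_k G_2 be a k-edge sum. If G_1 and G_2 admit tree-cut decompositions (T_1, 𝒳_1), (T_2, 𝒳_2), then G has a tree-cut decomposition whose adhesion equals max{k, adhesion(T_1,𝒳_1), adhesion(T_2,𝒳_2)}, and such that every torso of the new decomposition is isomorphic to a torso of one of the original decompositions, with core vertices mapped to core vertices. -/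
open Sym2

namespace ESum
open Multigraph SimpleGraph

variable {V : Type}

lemma reach_or {T : SimpleGraph V} {a b x : V} (p : T.Walk x a) :
    (T.deleteEdges {s(a, b)}).Reachable x a ∨ (T.deleteEdges {s(a, b)}).Reachable x b := by
  induction p with
  | nil => exact Or.inl (Reachable.refl _)
  | @cons u v a h p ih =>
    by_cases he : s(u, v) = (s(a, b) : Sym2 V)
    · rw [Sym2.eq_iff] at he
      rcases he with ⟨rfl, rfl⟩ | ⟨rfl, rfl⟩
      · exact Or.inl (Reachable.refl _)
      · exact Or.inr (Reachable.refl _)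
    · have hadj : (T.deleteEdges {s(a, b)}).Adj u v := by
        rw [SimpleGraph.deleteEdges_adj]
        exact ⟨h, by simpa using he⟩
      rcases ih with h' | h'
      · exact Or.inl (hadj.reachable.trans h')
      · exact Or.inr (hadj.reachable.trans h')

lemma tree_not_reach {T : SimpleGraph V} (hT : T.IsTree) {a b : V} (hab : T.Adj a b) :
    ¬ (T.deleteEdges {s(a, b)}).Reachable a b := by
  have h := (SimpleGraph.isAcyclic_iff_forall_adj_isBridge.1 hT.IsAcyclic) hab
  exact SimpleGraph.isBridge_iff.1 h

lemma delAt_not_mem_support {T : SimpleGraph V} {t u u' : V}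
    (p : (Multigraph.delAt T t).Walk u u') : u ≠ t → t ∉ p.support := by
  induction p with
  | nil => intro hu; simpa using fun h => hu h.symm
  | @cons u v w h p ih =>
    intro hu
    simp only [Walk.support_cons, List.mem_cons, not_or]
    exact ⟨fun ht => hu ht.symm, ih h.2.2⟩

/-- The inclusion homomorphism from `delAt T t` to `T`. -/
def delAtHom (T : SimpleGraph V) (t : V) : Multigraph.delAt T t →g T where
  toFun := id
  map_rel' := fun h => h.1

lemma delAt_unique_nbr {T : SimpleGraph V} (hT : T.IsTree) {t u u' : V}
    (hu : T.Adj t u) (hu' : T.Adj t u')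
    (h : (Multigraph.delAt T t).Reachable u u') : u = u' := by
  classical
  obtain ⟨p0⟩ := h
  set q : (Multigraph.delAt T t).Path u u' := p0.toPath with hq
  have hts : t ∉ q.val.support := delAt_not_mem_support q.val hu.ne'
  have hinj : Function.Injective (delAtHom T t) := fun x y hxy => hxy
  set q' : T.Walk u u' := q.val.map (delAtHom T t) with hq'
  have hq'path : q'.IsPath := Walk.map_isPath_of_injective hinj q.prop
  have hsupp : q'.support = q.val.support := by
    rw [hq']
    exact (Walk.support_map _ _).trans (List.map_id _ : List.map id _ = _)
  have hts' : t ∉ q'.support := hsupp ▸ hts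
  have h₁ : (Walk.cons hu q').IsPath := by
    rw [Walk.cons_isPath_iff]; exact ⟨hq'path, hts'⟩
  have h₂ : (Walk.cons hu' (Walk.nil : T.Walk u' u')).IsPath := by
    simp [Walk.cons_isPath_iff, hu'.ne]
  obtain ⟨P, -, hP⟩ := hT.existsUnique_path t u'
  have heq : Walk.cons hu q' = Walk.cons hu' Walk.nil := (hP _ h₁).trans (hP _ h₂).symm
  have := congrArg Walk.support heq
  rw [Walk.support_cons, Walk.support_cons, Walk.support_nil,
    Walk.support_eq_cons q'] at this
  simp only [List.cons.injEq] at this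
  exact this.2.1

lemma reach_invariant {H : SimpleGraph V} {P : V → Prop}
    (hP : ∀ {x y}, H.Adj x y → (P x ↔ P y)) {x y : V} (h : H.Reachable x y) : P x ↔ P y := by
  obtain ⟨p⟩ := h
  induction p with
  | nil => exact Iff.rfl
  | cons h p ih => exact (hP h).trans ih

lemma exists_eq_mk {α : Type} (z : Sym2 α) : ∃ x y, z = s(x, y) :=
  Sym2.ind (fun x y => ⟨x, y, rfl⟩) z

lemma ends_at (G : Multigraph) {e : G.E} {v : G.V} (h : v ∈ G.ends e) :
    ∃ x, x ≠ v ∧ G.ends e = s(x, v) :=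
  ⟨Sym2.Mem.other h, Sym2.other_ne (G.no_loops e) h, by
    conv_lhs => rw [← Sym2.other_spec h]
    exact Sym2.eq_swap⟩

lemma ends_not_at (G : Multigraph) {e : G.E} {v : G.V} (h : v ∉ G.ends e) :
    ∃ x y, x ≠ v ∧ y ≠ v ∧ G.ends e = s(x, y) := by
  obtain ⟨x, y, hxy⟩ := exists_eq_mk (G.ends e)
  refine ⟨x, y, ?_, ?_, hxy⟩ <;> rintro rfl <;> apply h <;> rw [hxy]
  · exact Sym2.mem_mk_left _ _
  · exact Sym2.mem_mk_right _ _

lemma mem_edgeCut_iff {G : Multigraph} {U : Set G.V} {e : G.E} {p q : G.V}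
    (h : G.ends e = s(p, q)) :
    e ∈ G.edgeCut U ↔ ((p ∈ U ∧ q ∉ U) ∨ (q ∈ U ∧ p ∉ U)) := by
  constructor
  · rintro ⟨a, b, hab, ha, hb⟩
    rw [h] at hab
    rw [Sym2.eq_iff] at hab
    rcases hab with ⟨rfl, rfl⟩ | ⟨rfl, rfl⟩
    · exact Or.inl ⟨ha, hb⟩
    · exact Or.inr ⟨ha, hb⟩
  · rintro (⟨h1, h2⟩ | ⟨h1, h2⟩)
    exacts [⟨p, q, h, h1, h2⟩, ⟨q, p, h.trans (Sym2.eq_swap), h1, h2⟩]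


section DecompLemmas

variable {G : Multigraph} (D : TreeCutDecomp G)

lemma bag_unique {s s' : D.T} {v : G.V} (hs : v ∈ D.bag s) (hs' : v ∈ D.bag s') : s = s' := by
  by_contra h
  exact Set.disjoint_left.1 (D.disj s s' h) hs hs'

lemma proj_eq_inl {t : D.T} {v : G.V} (hv : v ∈ D.bag t) :
    D.proj t v = Sum.inl ⟨v, hv⟩ := by
  rw [TreeCutDecomp.proj, dif_pos hv]

lemma proj_eq_inr {t : D.T} {v : G.V} (hv : v ∉ D.bag t) {u : D.T} (hadj : D.tree.Adj t u)
    (hw : ∃ s, v ∈ D.bag s ∧ (Multigraph.delAt D.tree t).Reachable s u) :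
    D.proj t v = Sum.inr ⟨u, hadj⟩ := by
  rw [TreeCutDecomp.proj, dif_neg hv]
  obtain ⟨s, hs, hr⟩ := hw
  obtain ⟨s', hs', hr'⟩ := (D.exists_periph t v hv).choose_spec.2
  have hss : s' = s := bag_unique D hs' hs
  subst hss
  have : (D.exists_periph t v hv).choose = u :=
    delAt_unique_nbr D.isTree (D.exists_periph t v hv).choose_spec.1 hadj (hr'.symm.trans hr)
  subst this
  rfl

lemma proj_inr_spec {t : D.T} {v : G.V} (hv : v ∉ D.bag t) {c : {u : D.T // D.tree.Adj t u}}
    (h : D.proj t v = Sum.inr c) :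
    ∃ s, v ∈ D.bag s ∧ (Multigraph.delAt D.tree t).Reachable s c.val := by
  rw [TreeCutDecomp.proj, dif_neg hv] at h
  obtain ⟨s, hs, hr⟩ := (D.exists_periph t v hv).choose_spec.2
  refine ⟨s, hs, ?_⟩
  have : (D.exists_periph t v hv).choose = c.val := by
    have := congrArg (fun z => Sum.elim (fun _ => (D.exists_periph t v hv).choose)
      (fun u : {u : D.T // D.tree.Adj t u} => u.val) z) h
    simpa using this
  rwa [this] at hr

lemma mem_sideSet_iff {u v : D.T} {x : G.V} {s : D.T} (hx : x ∈ D.bag s) :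
    x ∈ D.sideSet u v ↔ (D.tree.deleteEdges {s(u, v)}).Reachable v s := by
  constructor
  · rintro ⟨s', hr, hx'⟩
    rwa [bag_unique D hx' hx] at hr
  · intro h
    exact ⟨s, h, hx⟩

end DecompLemmas


section Combined

variable {k : ℕ} {G G₁ G₂ : Multigraph}
variable (w : EdgeSumWitness k G G₁ G₂) (D₁ : TreeCutDecomp G₁) (D₂ : TreeCutDecomp G₂)

/-- The node of `D₁` whose bag contains `v₁`. -/
noncomputable def t1 : D₁.T := (D₁.covers w.v₁).choose

/-- The node of `D₂` whose bag contains `v₂`. -/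
noncomputable def t2 : D₂.T := (D₂.covers w.v₂).choose

lemma mem_t1 : w.v₁ ∈ D₁.bag (t1 w D₁) := (D₁.covers w.v₁).choose_spec

lemma mem_t2 : w.v₂ ∈ D₂.bag (t2 w D₂) := (D₂.covers w.v₂).choose_spec

/-- Adjacency of the combined tree. -/
def newAdj : D₁.T ⊕ D₂.T → D₁.T ⊕ D₂.T → Prop
  | Sum.inl a, Sum.inl b => D₁.tree.Adj a b
  | Sum.inr a, Sum.inr b => D₂.tree.Adj a b
  | Sum.inl a, Sum.inr b => a = t1 w D₁ ∧ b = t2 w D₂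
  | Sum.inr a, Sum.inl b => a = t2 w D₂ ∧ b = t1 w D₁

/-- The combined tree. -/
def newTree : SimpleGraph (D₁.T ⊕ D₂.T) where
  Adj := newAdj w D₁ D₂
  symm := by
    refine ⟨?_⟩
    rintro (a | a) (b | b) h
    · exact h.symm
    · exact ⟨h.2, h.1⟩
    · exact ⟨h.2, h.1⟩
    · exact h.symm
  loopless := by
    refine ⟨?_⟩
    rintro (a | a) h
    · exact D₁.tree.loopless.irrefl a h
    · exact D₂.tree.loopless.irrefl a h

@[simp] lemma newTree_adj_inl_inl {a b : D₁.T} :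
    (newTree w D₁ D₂).Adj (Sum.inl a) (Sum.inl b) ↔ D₁.tree.Adj a b := Iff.rfl

@[simp] lemma newTree_adj_inr_inr {a b : D₂.T} :
    (newTree w D₁ D₂).Adj (Sum.inr a) (Sum.inr b) ↔ D₂.tree.Adj a b := Iff.rfl

@[simp] lemma newTree_adj_inl_inr {a : D₁.T} {b : D₂.T} :
    (newTree w D₁ D₂).Adj (Sum.inl a) (Sum.inr b) ↔ (a = t1 w D₁ ∧ b = t2 w D₂) := Iff.rfl

@[simp] lemma newTree_adj_inr_inl {a : D₂.T} {b : D₁.T} :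
    (newTree w D₁ D₂).Adj (Sum.inr a) (Sum.inl b) ↔ (a = t2 w D₂ ∧ b = t1 w D₁) := Iff.rfl

/-- Left inclusion homomorphism. -/
def homL : D₁.tree →g newTree w D₁ D₂ where
  toFun := Sum.inl
  map_rel' := fun h => h

/-- Right inclusion homomorphism. -/
def homR : D₂.tree →g newTree w D₁ D₂ where
  toFun := Sum.inr
  map_rel' := fun h => h

lemma newTree_preconnected : (newTree w D₁ D₂).Preconnected := by
  have hbr : (newTree w D₁ D₂).Adj (Sum.inr (t2 w D₂)) (Sum.inl (t1 w D₁)) := ⟨rfl, rfl⟩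
  have key : ∀ x, (newTree w D₁ D₂).Reachable x (Sum.inl (t1 w D₁)) := by
    rintro (a | a)
    · exact (D₁.isTree.isConnected.preconnected a (t1 w D₁)).map (homL w D₁ D₂)
    · exact ((D₂.isTree.isConnected.preconnected a (t2 w D₂)).map (homR w D₁ D₂)).trans
        hbr.reachable
  intro x y
  exact (key x).trans (key y).symm

end Combined


section Combined2

variable {k : ℕ} {G G₁ G₂ : Multigraph}
variable (w : EdgeSumWitness k G G₁ G₂) (D₁ : TreeCutDecomp G₁) (D₂ : TreeCutDecomp G₂)

/-- Side predicate for an internal `D₁` edge `ab` of the combined tree (the `b`-side). -/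
def PA (a b : D₁.T) : D₁.T ⊕ D₂.T → Prop :=
  Sum.elim (fun s => (D₁.tree.deleteEdges {s(a, b)}).Reachable b s)
    (fun _ => (D₁.tree.deleteEdges {s(a, b)}).Reachable b (t1 w D₁))

/-- Side predicate for an internal `D₂` edge. -/
def PA₂ (a b : D₂.T) : D₁.T ⊕ D₂.T → Prop :=
  Sum.elim (fun _ => (D₂.tree.deleteEdges {s(a, b)}).Reachable b (t2 w D₂))
    (fun s => (D₂.tree.deleteEdges {s(a, b)}).Reachable b s)

/-- Side predicate for the bridge edge (the `G₂`-side). -/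
def PB : D₁.T ⊕ D₂.T → Prop := Sum.elim (fun _ => False) (fun _ => True)

lemma PA_adj {a b : D₁.T} {x y : D₁.T ⊕ D₂.T}
    (h : ((newTree w D₁ D₂).deleteEdges {s(Sum.inl a, Sum.inl b)}).Adj x y) :
    PA w D₁ D₂ a b x ↔ PA w D₁ D₂ a b y := by
  rw [SimpleGraph.deleteEdges_adj] at h
  obtain ⟨hxy, hne⟩ := h
  simp only [Set.mem_singleton_iff] at hne
  match x, y with
  | Sum.inl x, Sum.inl y =>
    have hne' : s(x, y) ≠ (s(a, b) : Sym2 D₁.T) := by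
      intro hh
      exact hne (by rw [← Sym2.map_pair_eq Sum.inl, ← Sym2.map_pair_eq Sum.inl, hh])
    have hadj : (D₁.tree.deleteEdges {s(a, b)}).Adj x y :=
      SimpleGraph.deleteEdges_adj.2 ⟨hxy, by simpa using hne'⟩
    exact ⟨fun h' => h'.trans hadj.reachable, fun h' => h'.trans hadj.symm.reachable⟩
  | Sum.inl x, Sum.inr y =>
    obtain ⟨rfl, rfl⟩ : x = t1 w D₁ ∧ y = t2 w D₂ := hxy
    exact Iff.rfl
  | Sum.inr x, Sum.inl y =>
    obtain ⟨rfl, rfl⟩ : x = t2 w D₂ ∧ y = t1 w D₁ := hxy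
    exact Iff.rfl
  | Sum.inr x, Sum.inr y => exact Iff.rfl

lemma PA₂_adj {a b : D₂.T} {x y : D₁.T ⊕ D₂.T}
    (h : ((newTree w D₁ D₂).deleteEdges {s(Sum.inr a, Sum.inr b)}).Adj x y) :
    PA₂ w D₁ D₂ a b x ↔ PA₂ w D₁ D₂ a b y := by
  rw [SimpleGraph.deleteEdges_adj] at h
  obtain ⟨hxy, hne⟩ := h
  simp only [Set.mem_singleton_iff] at hne
  match x, y with
  | Sum.inr x, Sum.inr y =>
    have hne' : s(x, y) ≠ (s(a, b) : Sym2 D₂.T) := by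
      intro hh
      exact hne (by rw [← Sym2.map_pair_eq Sum.inr, ← Sym2.map_pair_eq Sum.inr, hh])
    have hadj : (D₂.tree.deleteEdges {s(a, b)}).Adj x y :=
      SimpleGraph.deleteEdges_adj.2 ⟨hxy, by simpa using hne'⟩
    exact ⟨fun h' => h'.trans hadj.reachable, fun h' => h'.trans hadj.symm.reachable⟩
  | Sum.inl x, Sum.inr y =>
    obtain ⟨rfl, rfl⟩ : x = t1 w D₁ ∧ y = t2 w D₂ := hxy
    exact Iff.rfl
  | Sum.inr x, Sum.inl y =>
    obtain ⟨rfl, rfl⟩ : x = t2 w D₂ ∧ y = t1 w D₁ := hxy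
    exact Iff.rfl
  | Sum.inl x, Sum.inl y => exact Iff.rfl

lemma PB_adj {x y : D₁.T ⊕ D₂.T}
    (h : ((newTree w D₁ D₂).deleteEdges
      {s(Sum.inl (t1 w D₁), Sum.inr (t2 w D₂))}).Adj x y) :
    PB D₁ D₂ x ↔ PB D₁ D₂ y := by
  rw [SimpleGraph.deleteEdges_adj] at h
  obtain ⟨hxy, hne⟩ := h
  simp only [Set.mem_singleton_iff] at hne
  match x, y with
  | Sum.inl x, Sum.inl y => exact Iff.rfl
  | Sum.inr x, Sum.inr y => exact Iff.rfl
  | Sum.inl x, Sum.inr y =>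
    obtain ⟨rfl, rfl⟩ : x = t1 w D₁ ∧ y = t2 w D₂ := hxy
    exact absurd rfl hne
  | Sum.inr x, Sum.inl y =>
    obtain ⟨rfl, rfl⟩ : x = t2 w D₂ ∧ y = t1 w D₁ := hxy
    exact absurd Sym2.eq_swap hne

/-- `Sum.inl` as a homomorphism into the deleted combined graph, for a deleted `D₁` edge. -/
def homLdelA (a b : D₁.T) : D₁.tree.deleteEdges {s(a, b)} →g
    (newTree w D₁ D₂).deleteEdges {s(Sum.inl a, Sum.inl b)} where
  toFun := Sum.inl
  map_rel' := by
    intro x y h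
    rw [SimpleGraph.deleteEdges_adj] at h ⊢
    refine ⟨h.1, ?_⟩
    simp only [Set.mem_singleton_iff] at h ⊢
    intro hh
    exact h.2 (Sym2.map.injective Sum.inl_injective
      (by rw [Sym2.map_pair_eq, Sym2.map_pair_eq]; exact hh))

/-- `Sum.inr` as a homomorphism into the deleted combined graph, for a deleted `D₁` edge. -/
def homRdelA (a b : D₁.T) : D₂.tree →g
    (newTree w D₁ D₂).deleteEdges {s(Sum.inl a, Sum.inl b)} where
  toFun := Sum.inr
  map_rel' := by
    intro x y h
    rw [SimpleGraph.deleteEdges_adj]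
    exact ⟨h, by simp [Sym2.eq_iff]⟩

/-- `Sum.inr` as a homomorphism into the deleted combined graph, for a deleted `D₂` edge. -/
def homRdelA₂ (a b : D₂.T) : D₂.tree.deleteEdges {s(a, b)} →g
    (newTree w D₁ D₂).deleteEdges {s(Sum.inr a, Sum.inr b)} where
  toFun := Sum.inr
  map_rel' := by
    intro x y h
    rw [SimpleGraph.deleteEdges_adj] at h ⊢
    refine ⟨h.1, ?_⟩
    simp only [Set.mem_singleton_iff] at h ⊢
    intro hh
    exact h.2 (Sym2.map.injective Sum.inr_injective
      (by rw [Sym2.map_pair_eq, Sym2.map_pair_eq]; exact hh))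

/-- `Sum.inl` as a homomorphism into the deleted combined graph, for a deleted `D₂` edge. -/
def homLdelA₂ (a b : D₂.T) : D₁.tree →g
    (newTree w D₁ D₂).deleteEdges {s(Sum.inr a, Sum.inr b)} where
  toFun := Sum.inl
  map_rel' := by
    intro x y h
    rw [SimpleGraph.deleteEdges_adj]
    exact ⟨h, by simp [Sym2.eq_iff]⟩

/-- `Sum.inl` as a homomorphism into the combined graph with the bridge deleted. -/
def homLdelB : D₁.tree →g
    (newTree w D₁ D₂).deleteEdges {s(Sum.inl (t1 w D₁), Sum.inr (t2 w D₂))} where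
  toFun := Sum.inl
  map_rel' := by
    intro x y h
    rw [SimpleGraph.deleteEdges_adj]
    exact ⟨h, by simp [Sym2.eq_iff]⟩

/-- `Sum.inr` as a homomorphism into the combined graph with the bridge deleted. -/
def homRdelB : D₂.tree →g
    (newTree w D₁ D₂).deleteEdges {s(Sum.inl (t1 w D₁), Sum.inr (t2 w D₂))} where
  toFun := Sum.inr
  map_rel' := by
    intro x y h
    rw [SimpleGraph.deleteEdges_adj]
    exact ⟨h, by simp [Sym2.eq_iff]⟩

lemma reachA_iff {a b : D₁.T} (x : D₁.T ⊕ D₂.T) :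
    ((newTree w D₁ D₂).deleteEdges {s(Sum.inl a, Sum.inl b)}).Reachable (Sum.inl b) x ↔
      PA w D₁ D₂ a b x := by
  constructor
  · intro h
    exact (reach_invariant (fun {x y} h => PA_adj w D₁ D₂ h) h).1 (SimpleGraph.Reachable.refl _)
  · rcases x with s | s
    · exact fun h => h.map (homLdelA w D₁ D₂ a b)
    · intro h
      have h1 : ((newTree w D₁ D₂).deleteEdges {s(Sum.inl a, Sum.inl b)}).Reachable
          (Sum.inl b) (Sum.inl (t1 w D₁)) := h.map (homLdelA w D₁ D₂ a b)
      have h2 : ((newTree w D₁ D₂).deleteEdges {s(Sum.inl a, Sum.inl b)}).Adj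
          (Sum.inl (t1 w D₁)) (Sum.inr (t2 w D₂)) :=
        SimpleGraph.deleteEdges_adj.2 ⟨⟨rfl, rfl⟩, by simp [Sym2.eq_iff]⟩
      have h3 : ((newTree w D₁ D₂).deleteEdges {s(Sum.inl a, Sum.inl b)}).Reachable
          (Sum.inr (t2 w D₂)) (Sum.inr s) :=
        (D₂.isTree.isConnected.preconnected (t2 w D₂) s).map (homRdelA w D₁ D₂ a b)
      exact h1.trans (h2.reachable.trans h3)

lemma reachA₂_iff {a b : D₂.T} (x : D₁.T ⊕ D₂.T) :
    ((newTree w D₁ D₂).deleteEdges {s(Sum.inr a, Sum.inr b)}).Reachable (Sum.inr b) x ↔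
      PA₂ w D₁ D₂ a b x := by
  constructor
  · intro h
    exact (reach_invariant (fun {x y} h => PA₂_adj w D₁ D₂ h) h).1 (SimpleGraph.Reachable.refl _)
  · rcases x with s | s
    swap
    · exact fun h => h.map (homRdelA₂ w D₁ D₂ a b)
    · intro h
      have h1 : ((newTree w D₁ D₂).deleteEdges {s(Sum.inr a, Sum.inr b)}).Reachable
          (Sum.inr b) (Sum.inr (t2 w D₂)) := h.map (homRdelA₂ w D₁ D₂ a b)
      have h2 : ((newTree w D₁ D₂).deleteEdges {s(Sum.inr a, Sum.inr b)}).Adj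
          (Sum.inr (t2 w D₂)) (Sum.inl (t1 w D₁)) :=
        SimpleGraph.deleteEdges_adj.2 ⟨⟨rfl, rfl⟩, by simp [Sym2.eq_iff]⟩
      have h3 : ((newTree w D₁ D₂).deleteEdges {s(Sum.inr a, Sum.inr b)}).Reachable
          (Sum.inl (t1 w D₁)) (Sum.inl s) :=
        (D₁.isTree.isConnected.preconnected (t1 w D₁) s).map (homLdelA₂ w D₁ D₂ a b)
      exact h1.trans (h2.reachable.trans h3)

lemma reachB_iff (x : D₁.T ⊕ D₂.T) :
    ((newTree w D₁ D₂).deleteEdges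
      {s(Sum.inl (t1 w D₁), Sum.inr (t2 w D₂))}).Reachable (Sum.inr (t2 w D₂)) x ↔
      PB D₁ D₂ x := by
  constructor
  · intro h
    exact (reach_invariant (fun {x y} h => PB_adj w D₁ D₂ h) h).1 trivial
  · rcases x with s | s
    · exact fun h => h.elim
    · exact fun _ => (D₂.isTree.isConnected.preconnected (t2 w D₂) s).map (homRdelB w D₁ D₂)

lemma reachB'_iff (x : D₁.T ⊕ D₂.T) :
    ((newTree w D₁ D₂).deleteEdges
      {s(Sum.inl (t1 w D₁), Sum.inr (t2 w D₂))}).Reachable (Sum.inl (t1 w D₁)) x ↔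
      ¬ PB D₁ D₂ x := by
  constructor
  · intro h hPB
    exact (reach_invariant (fun {x y} h => PB_adj w D₁ D₂ h) h).2 hPB
  · rcases x with s | s
    · exact fun _ => (D₁.isTree.isConnected.preconnected (t1 w D₁) s).map (homLdelB w D₁ D₂)
    · exact fun h => absurd trivial h

lemma newTree_isTree : (newTree w D₁ D₂).IsTree := by
  constructor
  · haveI : Nonempty (D₁.T ⊕ D₂.T) := ⟨Sum.inl (t1 w D₁)⟩
    exact ⟨newTree_preconnected w D₁ D₂⟩
  · rw [SimpleGraph.isAcyclic_iff_forall_adj_isBridge]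
    rintro (a | a) (b | b) hadj <;> rw [SimpleGraph.isBridge_iff]
    · intro h
      have hr : ((newTree w D₁ D₂).deleteEdges {s(Sum.inl a, Sum.inl b)}).Reachable
          (Sum.inl b) (Sum.inl a) :=
        SimpleGraph.Reachable.symm h
      have := (reachA_iff w D₁ D₂ (Sum.inl a)).1 hr
      exact tree_not_reach D₁.isTree hadj ((this : _).symm)
    · obtain ⟨rfl, rfl⟩ : a = t1 w D₁ ∧ b = t2 w D₂ := hadj
      intro h
      exact (reachB'_iff w D₁ D₂ (Sum.inr (t2 w D₂))).1 h trivial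
    · obtain ⟨rfl, rfl⟩ : a = t2 w D₂ ∧ b = t1 w D₁ := hadj
      intro h
      rw [show (s(Sum.inr (t2 w D₂), Sum.inl (t1 w D₁)) : Sym2 (D₁.T ⊕ D₂.T)) =
        s(Sum.inl (t1 w D₁), Sum.inr (t2 w D₂)) from Sym2.eq_swap] at h
      exact (reachB_iff w D₁ D₂ (Sum.inl (t1 w D₁))).1 h
    · intro h
      have hr : ((newTree w D₁ D₂).deleteEdges {s(Sum.inr a, Sum.inr b)}).Reachable
          (Sum.inr b) (Sum.inr a) :=
        SimpleGraph.Reachable.symm h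
      have := (reachA₂_iff w D₁ D₂ (Sum.inr a)).1 hr
      exact tree_not_reach D₂.isTree hadj ((this : _).symm)

/-- The bags of the combined decomposition. -/
def newBag : D₁.T ⊕ D₂.T → Set G.V
  | Sum.inl s => {x | Sum.elim (fun u => u.val ∈ D₁.bag s) (fun _ => False) (w.α x)}
  | Sum.inr s => {x | Sum.elim (fun _ => False) (fun u => u.val ∈ D₂.bag s) (w.α x)}

/-- The combined tree-cut decomposition. -/
@[reducible] noncomputable def combined : TreeCutDecomp G where
  T := D₁.T ⊕ D₂.T
  finT := inferInstance
  tree := newTree w D₁ D₂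
  isTree := newTree_isTree w D₁ D₂
  bag := newBag w D₁ D₂
  disj := by
    rintro (s | s) (t | t) hne <;> rw [Set.disjoint_left] <;> intro x hx hx'
    · have hst : s ≠ t := fun h => hne (by rw [h])
      replace hx : Sum.elim (fun u : {x : G₁.V // x ≠ w.v₁} => u.val ∈ D₁.bag s)
          (fun _ => False) (w.α x) := hx
      replace hx' : Sum.elim (fun u : {x : G₁.V // x ≠ w.v₁} => u.val ∈ D₁.bag t)
          (fun _ => False) (w.α x) := hx'
      rcases hα : w.α x with u | u <;> rw [hα] at hx hx'
      · exact Set.disjoint_left.1 (D₁.disj s t hst) hx hx'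
      · exact hx
    · replace hx : Sum.elim (fun u : {x : G₁.V // x ≠ w.v₁} => u.val ∈ D₁.bag s)
          (fun _ => False) (w.α x) := hx
      replace hx' : Sum.elim (fun _ => False)
          (fun u : {y : G₂.V // y ≠ w.v₂} => u.val ∈ D₂.bag t) (w.α x) := hx'
      rcases hα : w.α x with u | u <;> rw [hα] at hx hx'
      · exact hx'
      · exact hx
    · replace hx : Sum.elim (fun _ => False)
          (fun u : {y : G₂.V // y ≠ w.v₂} => u.val ∈ D₂.bag s) (w.α x) := hx
      replace hx' : Sum.elim (fun u : {x : G₁.V // x ≠ w.v₁} => u.val ∈ D₁.bag t)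
          (fun _ => False) (w.α x) := hx'
      rcases hα : w.α x with u | u <;> rw [hα] at hx hx'
      · exact hx
      · exact hx'
    · have hst : s ≠ t := fun h => hne (by rw [h])
      replace hx : Sum.elim (fun _ => False)
          (fun u : {y : G₂.V // y ≠ w.v₂} => u.val ∈ D₂.bag s) (w.α x) := hx
      replace hx' : Sum.elim (fun _ => False)
          (fun u : {y : G₂.V // y ≠ w.v₂} => u.val ∈ D₂.bag t) (w.α x) := hx'
      rcases hα : w.α x with u | u <;> rw [hα] at hx hx'
      · exact hx
      · exact Set.disjoint_left.1 (D₂.disj s t hst) hx hx'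
  covers := by
    intro x
    rcases hα : w.α x with u | u
    · obtain ⟨s, hs⟩ := D₁.covers u.val
      refine ⟨Sum.inl s, ?_⟩
      show Sum.elim (fun u : {x : G₁.V // x ≠ w.v₁} => u.val ∈ D₁.bag s)
          (fun _ => False) (w.α x)
      rw [hα]; exact hs
    · obtain ⟨s, hs⟩ := D₂.covers u.val
      refine ⟨Sum.inr s, ?_⟩
      show Sum.elim (fun _ => False)
          (fun u : {y : G₂.V // y ≠ w.v₂} => u.val ∈ D₂.bag s) (w.α x)
      rw [hα]; exact hs

end Combined2


section Combined3

variable {k : ℕ} {G G₁ G₂ : Multigraph}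
variable (w : EdgeSumWitness k G G₁ G₂) (D₁ : TreeCutDecomp G₁) (D₂ : TreeCutDecomp G₂)

/-- The inclusion of `G₁`-vertices into `G`. -/
def σ₁ (x : G₁.V) (hx : x ≠ w.v₁) : G.V := w.α.symm (Sum.inl ⟨x, hx⟩)

/-- The inclusion of `G₂`-vertices into `G`. -/
def σ₂ (y : G₂.V) (hy : y ≠ w.v₂) : G.V := w.α.symm (Sum.inr ⟨y, hy⟩)

lemma α_σ₁ {x : G₁.V} {hx : x ≠ w.v₁} : w.α (σ₁ w x hx) = Sum.inl ⟨x, hx⟩ :=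
  w.α.apply_symm_apply _

lemma α_σ₂ {y : G₂.V} {hy : y ≠ w.v₂} : w.α (σ₂ w y hy) = Sum.inr ⟨y, hy⟩ :=
  w.α.apply_symm_apply _

lemma combined_tree : (combined w D₁ D₂).tree = newTree w D₁ D₂ := rfl

lemma combined_bag : (combined w D₁ D₂).bag = newBag w D₁ D₂ := rfl

lemma σ₁_mem_newBag_inl {x : G₁.V} {hx : x ≠ w.v₁} {s : D₁.T} :
    σ₁ w x hx ∈ newBag w D₁ D₂ (Sum.inl s) ↔ x ∈ D₁.bag s := by
  show Sum.elim (fun u : {x : G₁.V // x ≠ w.v₁} => u.val ∈ D₁.bag s) (fun _ => False)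
      (w.α (σ₁ w x hx)) ↔ _
  rw [α_σ₁]
  exact Iff.rfl

lemma σ₂_mem_newBag_inr {y : G₂.V} {hy : y ≠ w.v₂} {s : D₂.T} :
    σ₂ w y hy ∈ newBag w D₁ D₂ (Sum.inr s) ↔ y ∈ D₂.bag s := by
  show Sum.elim (fun _ => False) (fun u : {y : G₂.V // y ≠ w.v₂} => u.val ∈ D₂.bag s)
      (w.α (σ₂ w y hy)) ↔ _
  rw [α_σ₂]
  exact Iff.rfl

/-- Membership of a `G₁`-vertex in a side set of a `D₁`-internal edge. -/
lemma mem_UA_σ₁ {a b : D₁.T} (x : G₁.V) (hx : x ≠ w.v₁) :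
    σ₁ w x hx ∈ (combined w D₁ D₂).sideSet (Sum.inl a) (Sum.inl b) ↔ x ∈ D₁.sideSet a b := by
  obtain ⟨s, hs⟩ := D₁.covers x
  have h1 : σ₁ w x hx ∈ (combined w D₁ D₂).bag (Sum.inl s) := by
    rw [combined_bag]; exact (σ₁_mem_newBag_inl w D₁ D₂).2 hs
  refine (mem_sideSet_iff (combined w D₁ D₂) h1).trans ?_
  rw [mem_sideSet_iff D₁ hs, combined_tree,
    reachA_iff]
  exact Iff.rfl

lemma mem_UA_σ₂ {a b : D₁.T} (y : G₂.V) (hy : y ≠ w.v₂) :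
    σ₂ w y hy ∈ (combined w D₁ D₂).sideSet (Sum.inl a) (Sum.inl b) ↔
      w.v₁ ∈ D₁.sideSet a b := by
  obtain ⟨s, hs⟩ := D₂.covers y
  have h1 : σ₂ w y hy ∈ (combined w D₁ D₂).bag (Sum.inr s) := by
    rw [combined_bag]; exact (σ₂_mem_newBag_inr w D₁ D₂).2 hs
  refine (mem_sideSet_iff (combined w D₁ D₂) h1).trans ?_
  rw [mem_sideSet_iff D₁ (mem_t1 w D₁), combined_tree,
    reachA_iff]
  exact Iff.rfl

/-- Membership of a `G₂`-vertex in a side set of a `D₂`-internal edge. -/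
lemma mem_UA₂_σ₂ {a b : D₂.T} (y : G₂.V) (hy : y ≠ w.v₂) :
    σ₂ w y hy ∈ (combined w D₁ D₂).sideSet (Sum.inr a) (Sum.inr b) ↔ y ∈ D₂.sideSet a b := by
  obtain ⟨s, hs⟩ := D₂.covers y
  have h1 : σ₂ w y hy ∈ (combined w D₁ D₂).bag (Sum.inr s) := by
    rw [combined_bag]; exact (σ₂_mem_newBag_inr w D₁ D₂).2 hs
  refine (mem_sideSet_iff (combined w D₁ D₂) h1).trans ?_
  rw [mem_sideSet_iff D₂ hs, combined_tree,
    reachA₂_iff]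
  exact Iff.rfl

lemma mem_UA₂_σ₁ {a b : D₂.T} (x : G₁.V) (hx : x ≠ w.v₁) :
    σ₁ w x hx ∈ (combined w D₁ D₂).sideSet (Sum.inr a) (Sum.inr b) ↔
      w.v₂ ∈ D₂.sideSet a b := by
  obtain ⟨s, hs⟩ := D₁.covers x
  have h1 : σ₁ w x hx ∈ (combined w D₁ D₂).bag (Sum.inl s) := by
    rw [combined_bag]; exact (σ₁_mem_newBag_inl w D₁ D₂).2 hs
  refine (mem_sideSet_iff (combined w D₁ D₂) h1).trans ?_
  rw [mem_sideSet_iff D₂ (mem_t2 w D₂), combined_tree,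
    reachA₂_iff]
  exact Iff.rfl

/-- Membership in the side set of the bridge edge (`G₂`-side). -/
lemma mem_UB_σ₂ {y : G₂.V} {hy : y ≠ w.v₂} :
    σ₂ w y hy ∈ (combined w D₁ D₂).sideSet (Sum.inl (t1 w D₁)) (Sum.inr (t2 w D₂)) := by
  obtain ⟨s, hs⟩ := D₂.covers y
  have h1 : σ₂ w y hy ∈ (combined w D₁ D₂).bag (Sum.inr s) := by
    rw [combined_bag]; exact (σ₂_mem_newBag_inr w D₁ D₂).2 hs
  refine (mem_sideSet_iff (combined w D₁ D₂) h1).2 ?_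
  rw [combined_tree]
  exact (reachB_iff w D₁ D₂ (Sum.inr s)).2 trivial

lemma not_mem_UB_σ₁ {x : G₁.V} {hx : x ≠ w.v₁} :
    σ₁ w x hx ∉ (combined w D₁ D₂).sideSet (Sum.inl (t1 w D₁)) (Sum.inr (t2 w D₂)) := by
  obtain ⟨s, hs⟩ := D₁.covers x
  have h1 : σ₁ w x hx ∈ (combined w D₁ D₂).bag (Sum.inl s) := by
    rw [combined_bag]; exact (σ₁_mem_newBag_inl w D₁ D₂).2 hs
  refine mt (mem_sideSet_iff (combined w D₁ D₂) h1).1 ?_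
  rw [combined_tree]
  exact fun h => (reachB_iff w D₁ D₂ (Sum.inl s)).1 h

lemma reachB'_swap_iff (x : D₁.T ⊕ D₂.T) :
    ((newTree w D₁ D₂).deleteEdges
      {s(Sum.inr (t2 w D₂), Sum.inl (t1 w D₁))}).Reachable (Sum.inl (t1 w D₁)) x ↔
      ¬ PB D₁ D₂ x := by
  rw [show (s(Sum.inr (t2 w D₂), Sum.inl (t1 w D₁)) : Sym2 (D₁.T ⊕ D₂.T)) =
    s(Sum.inl (t1 w D₁), Sum.inr (t2 w D₂)) from Sym2.eq_swap]
  exact reachB'_iff w D₁ D₂ x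

/-- Membership in the side set of the reversed bridge edge (`G₁`-side). -/
lemma mem_UB'_σ₁ {x : G₁.V} {hx : x ≠ w.v₁} :
    σ₁ w x hx ∈ (combined w D₁ D₂).sideSet (Sum.inr (t2 w D₂)) (Sum.inl (t1 w D₁)) := by
  obtain ⟨s, hs⟩ := D₁.covers x
  have h1 : σ₁ w x hx ∈ (combined w D₁ D₂).bag (Sum.inl s) := by
    rw [combined_bag]; exact (σ₁_mem_newBag_inl w D₁ D₂).2 hs
  refine (mem_sideSet_iff (combined w D₁ D₂) h1).2 ?_
  exact (reachB'_swap_iff w D₁ D₂ (Sum.inl s)).2 (fun h => h)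

lemma not_mem_UB'_σ₂ {y : G₂.V} {hy : y ≠ w.v₂} :
    σ₂ w y hy ∉ (combined w D₁ D₂).sideSet (Sum.inr (t2 w D₂)) (Sum.inl (t1 w D₁)) := by
  obtain ⟨s, hs⟩ := D₂.covers y
  have h1 : σ₂ w y hy ∈ (combined w D₁ D₂).bag (Sum.inr s) := by
    rw [combined_bag]; exact (σ₂_mem_newBag_inr w D₁ D₂).2 hs
  refine mt (mem_sideSet_iff (combined w D₁ D₂) h1).1 ?_
  exact fun h => (reachB'_swap_iff w D₁ D₂ (Sum.inr s)).1 h trivial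

open Classical in
/-- The inclusion of `G₁`-edges into `G`. -/
noncomputable def ι₁ (e : G₁.E) : G.E :=
  w.β.symm (if h : w.v₁ ∈ G₁.ends e then Sum.inr ⟨e, h⟩ else Sum.inl (Sum.inl ⟨e, h⟩))

open Classical in
/-- The inclusion of `G₂`-edges into `G`. -/
noncomputable def ι₂ (e : G₂.E) : G.E :=
  w.β.symm (if h : w.v₂ ∈ G₂.ends e then Sum.inr (w.π.symm ⟨e, h⟩)
    else Sum.inl (Sum.inr ⟨e, h⟩))

lemma ι₁_inj : Function.Injective (ι₁ w) := by
  intro e f hef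
  have h2 := w.β.symm.injective hef
  by_cases he : w.v₁ ∈ G₁.ends e <;> by_cases hf : w.v₁ ∈ G₁.ends f <;>
    simp only [dif_pos, dif_neg, he, hf] at h2 <;> simp_all

lemma ι₂_inj : Function.Injective (ι₂ w) := by
  intro e f hef
  have h2 := w.β.symm.injective hef
  by_cases he : w.v₂ ∈ G₂.ends e <;> by_cases hf : w.v₂ ∈ G₂.ends f <;>
    simp only [dif_pos, dif_neg, he, hf] at h2
  · have := w.π.symm.injective (Sum.inr_injective h2)
    simpa using this
  · exact absurd h2 (by simp)
  · exact absurd h2 (by simp)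
  · simpa using Sum.inl_injective h2

lemma ends_ι₁_not_mem {e : G₁.E} (h : w.v₁ ∉ G₁.ends e) {x y : G₁.V} (hx : x ≠ w.v₁)
    (hy : y ≠ w.v₁) (hxy : G₁.ends e = s(x, y)) :
    G.ends (ι₁ w e) = s(σ₁ w x hx, σ₁ w y hy) := by
  unfold ι₁
  rw [dif_neg h]
  exact w.ends₁ ⟨e, h⟩ x y hx hy hxy

lemma ends_ι₁_mem {e : G₁.E} (h : w.v₁ ∈ G₁.ends e) {x : G₁.V} {y : G₂.V} (hx : x ≠ w.v₁)
    (hy : y ≠ w.v₂) (hxe : G₁.ends e = s(x, w.v₁))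
    (hye : G₂.ends (w.π ⟨e, h⟩).val = s(y, w.v₂)) :
    G.ends (ι₁ w e) = s(σ₁ w x hx, σ₂ w y hy) := by
  unfold ι₁
  rw [dif_pos h]
  exact w.ends₃ ⟨e, h⟩ x y hx hy hxe hye

lemma ends_ι₂_not_mem {e : G₂.E} (h : w.v₂ ∉ G₂.ends e) {x y : G₂.V} (hx : x ≠ w.v₂)
    (hy : y ≠ w.v₂) (hxy : G₂.ends e = s(x, y)) :
    G.ends (ι₂ w e) = s(σ₂ w x hx, σ₂ w y hy) := by
  unfold ι₂
  rw [dif_neg h]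
  exact w.ends₂ ⟨e, h⟩ x y hx hy hxy

lemma ends_ι₂_mem {e : G₂.E} (h : w.v₂ ∈ G₂.ends e) {x : G₁.V} {y : G₂.V} (hx : x ≠ w.v₁)
    (hy : y ≠ w.v₂) (hxe : G₁.ends (w.π.symm ⟨e, h⟩).val = s(x, w.v₁))
    (hye : G₂.ends e = s(y, w.v₂)) :
    G.ends (ι₂ w e) = s(σ₁ w x hx, σ₂ w y hy) := by
  unfold ι₂
  rw [dif_pos h]
  refine w.ends₃ (w.π.symm ⟨e, h⟩) x y hx hy hxe ?_
  rw [Equiv.apply_symm_apply]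
  exact hye

lemma ι₁_eq_of_β_inl {e : G.E} {e₁ : {e : G₁.E // w.v₁ ∉ G₁.ends e}}
    (hβ : w.β e = Sum.inl (Sum.inl e₁)) : ι₁ w e₁.val = e := by
  unfold ι₁
  rw [dif_neg e₁.prop, ← hβ]
  exact w.β.symm_apply_apply e

lemma ι₁_eq_of_β_inr {e : G.E} {e₀ : {e : G₁.E // w.v₁ ∈ G₁.ends e}}
    (hβ : w.β e = Sum.inr e₀) : ι₁ w e₀.val = e := by
  unfold ι₁
  rw [dif_pos e₀.prop, ← hβ]
  exact w.β.symm_apply_apply e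

lemma ι₂_eq_of_β_inr {e : G.E} {e₂ : {e : G₂.E // w.v₂ ∉ G₂.ends e}}
    (hβ : w.β e = Sum.inl (Sum.inr e₂)) : ι₂ w e₂.val = e := by
  unfold ι₂
  rw [dif_neg e₂.prop, ← hβ]
  exact w.β.symm_apply_apply e

lemma ι₂_eq_of_β_merged {e : G.E} {e₀ : {e : G₁.E // w.v₁ ∈ G₁.ends e}}
    (hβ : w.β e = Sum.inr e₀) : ι₂ w (w.π e₀).val = e := by
  unfold ι₂
  rw [dif_pos (w.π e₀).prop]
  have : w.π.symm ⟨(w.π e₀).val, (w.π e₀).prop⟩ = e₀ := by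
    rw [show (⟨(w.π e₀).val, (w.π e₀).prop⟩ : {e : G₂.E // w.v₂ ∈ G₂.ends e}) = w.π e₀ from rfl,
      Equiv.symm_apply_apply]
  rw [this, ← hβ]
  exact w.β.symm_apply_apply e

end Combined3


section Combined4

variable {k : ℕ} {G G₁ G₂ : Multigraph}
variable (w : EdgeSumWitness k G G₁ G₂) (D₁ : TreeCutDecomp G₁) (D₂ : TreeCutDecomp G₂)

lemma cutA {a b : D₁.T} :
    G.edgeCut ((combined w D₁ D₂).sideSet (Sum.inl a) (Sum.inl b)) =
      ι₁ w '' (G₁.edgeCut (D₁.sideSet a b)) := by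
  ext e
  rcases hβ : w.β e with (e₁ | e₂) | e₀
  · obtain ⟨x, y, hx, hy, hxy⟩ := ends_not_at G₁ e₁.prop
    have hι : ι₁ w e₁.val = e := ι₁_eq_of_β_inl w hβ
    have hends : G.ends e = s(σ₁ w x hx, σ₁ w y hy) := by
      rw [← hι]; exact ends_ι₁_not_mem w e₁.prop hx hy hxy
    have hrhs : e ∈ ι₁ w '' (G₁.edgeCut (D₁.sideSet a b)) ↔
        e₁.val ∈ G₁.edgeCut (D₁.sideSet a b) := by
      constructor
      · rintro ⟨f, hf, hfe⟩
        rwa [ι₁_inj w (hfe.trans hι.symm)] at hf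
      · intro h; exact ⟨e₁.val, h, hι⟩
    rw [mem_edgeCut_iff hends, hrhs, mem_edgeCut_iff hxy, mem_UA_σ₁ w D₁ D₂ x hx,
      mem_UA_σ₁ w D₁ D₂ y hy]
  · obtain ⟨x, y, hx, hy, hxy⟩ := ends_not_at G₂ e₂.prop
    have hι : ι₂ w e₂.val = e := ι₂_eq_of_β_inr w hβ
    have hends : G.ends e = s(σ₂ w x hx, σ₂ w y hy) := by
      rw [← hι]; exact ends_ι₂_not_mem w e₂.prop hx hy hxy
    apply iff_of_false
    · rw [mem_edgeCut_iff hends, mem_UA_σ₂ w D₁ D₂ x hx, mem_UA_σ₂ w D₁ D₂ y hy]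
      rintro (⟨h1, h2⟩ | ⟨h1, h2⟩) <;> exact h2 h1
    · rintro ⟨f, hf, hfe⟩
      rw [← hfe] at hβ
      unfold ι₁ at hβ
      rw [Equiv.apply_symm_apply] at hβ
      split at hβ <;> simp at hβ
  · obtain ⟨x, hx, hxe⟩ := ends_at G₁ e₀.prop
    obtain ⟨y, hy, hye⟩ := ends_at G₂ (w.π e₀).prop
    have hι : ι₁ w e₀.val = e := ι₁_eq_of_β_inr w hβ
    have hends : G.ends e = s(σ₁ w x hx, σ₂ w y hy) := by
      rw [← hι]; exact ends_ι₁_mem w e₀.prop hx hy hxe hye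
    have hrhs : e ∈ ι₁ w '' (G₁.edgeCut (D₁.sideSet a b)) ↔
        e₀.val ∈ G₁.edgeCut (D₁.sideSet a b) := by
      constructor
      · rintro ⟨f, hf, hfe⟩
        rwa [ι₁_inj w (hfe.trans hι.symm)] at hf
      · intro h; exact ⟨e₀.val, h, hι⟩
    rw [mem_edgeCut_iff hends, hrhs, mem_edgeCut_iff hxe, mem_UA_σ₁ w D₁ D₂ x hx,
      mem_UA_σ₂ w D₁ D₂ y hy]

lemma cutA₂ {a b : D₂.T} :
    G.edgeCut ((combined w D₁ D₂).sideSet (Sum.inr a) (Sum.inr b)) =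
      ι₂ w '' (G₂.edgeCut (D₂.sideSet a b)) := by
  ext e
  rcases hβ : w.β e with (e₁ | e₂) | e₀
  · obtain ⟨x, y, hx, hy, hxy⟩ := ends_not_at G₁ e₁.prop
    have hι : ι₁ w e₁.val = e := ι₁_eq_of_β_inl w hβ
    have hends : G.ends e = s(σ₁ w x hx, σ₁ w y hy) := by
      rw [← hι]; exact ends_ι₁_not_mem w e₁.prop hx hy hxy
    apply iff_of_false
    · rw [mem_edgeCut_iff hends, mem_UA₂_σ₁ w D₁ D₂ x hx, mem_UA₂_σ₁ w D₁ D₂ y hy]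
      rintro (⟨h1, h2⟩ | ⟨h1, h2⟩) <;> exact h2 h1
    · rintro ⟨f, hf, hfe⟩
      rw [← hfe] at hβ
      unfold ι₂ at hβ
      rw [Equiv.apply_symm_apply] at hβ
      split at hβ <;> simp at hβ
  · obtain ⟨x, y, hx, hy, hxy⟩ := ends_not_at G₂ e₂.prop
    have hι : ι₂ w e₂.val = e := ι₂_eq_of_β_inr w hβ
    have hends : G.ends e = s(σ₂ w x hx, σ₂ w y hy) := by
      rw [← hι]; exact ends_ι₂_not_mem w e₂.prop hx hy hxy
    have hrhs : e ∈ ι₂ w '' (G₂.edgeCut (D₂.sideSet a b)) ↔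
        e₂.val ∈ G₂.edgeCut (D₂.sideSet a b) := by
      constructor
      · rintro ⟨f, hf, hfe⟩
        rwa [ι₂_inj w (hfe.trans hι.symm)] at hf
      · intro h; exact ⟨e₂.val, h, hι⟩
    rw [mem_edgeCut_iff hends, hrhs, mem_edgeCut_iff hxy, mem_UA₂_σ₂ w D₁ D₂ x hx,
      mem_UA₂_σ₂ w D₁ D₂ y hy]
  · obtain ⟨x, hx, hxe⟩ := ends_at G₁ e₀.prop
    obtain ⟨y, hy, hye⟩ := ends_at G₂ (w.π e₀).prop
    have hι : ι₁ w e₀.val = e := ι₁_eq_of_β_inr w hβ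
    have hends : G.ends e = s(σ₁ w x hx, σ₂ w y hy) := by
      rw [← hι]; exact ends_ι₁_mem w e₀.prop hx hy hxe hye
    have hι' : ι₂ w (w.π e₀).val = e := ι₂_eq_of_β_merged w hβ
    have hrhs : e ∈ ι₂ w '' (G₂.edgeCut (D₂.sideSet a b)) ↔
        (w.π e₀).val ∈ G₂.edgeCut (D₂.sideSet a b) := by
      constructor
      · rintro ⟨f, hf, hfe⟩
        rwa [ι₂_inj w (hfe.trans hι'.symm)] at hf
      · intro h; exact ⟨(w.π e₀).val, h, hι'⟩
    rw [mem_edgeCut_iff hends, hrhs, mem_edgeCut_iff hye, mem_UA₂_σ₁ w D₁ D₂ x hx,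
      mem_UA₂_σ₂ w D₁ D₂ y hy]
    exact Or.comm

lemma cutB :
    G.edgeCut ((combined w D₁ D₂).sideSet (Sum.inl (t1 w D₁)) (Sum.inr (t2 w D₂))) =
      Set.range (fun e₀ : {e : G₁.E // w.v₁ ∈ G₁.ends e} => w.β.symm (Sum.inr e₀)) := by
  ext e
  rcases hβ : w.β e with (e₁ | e₂) | e₀
  · apply iff_of_false
    · obtain ⟨x, y, hx, hy, hxy⟩ := ends_not_at G₁ e₁.prop
      have hι : ι₁ w e₁.val = e := ι₁_eq_of_β_inl w hβ
      have hends : G.ends e = s(σ₁ w x hx, σ₁ w y hy) := by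
        rw [← hι]; exact ends_ι₁_not_mem w e₁.prop hx hy hxy
      rw [mem_edgeCut_iff hends]
      rintro (⟨h1, h2⟩ | ⟨h1, h2⟩) <;> exact not_mem_UB_σ₁ w D₁ D₂ h1
    · rintro ⟨f, rfl⟩
      rw [Equiv.apply_symm_apply] at hβ
      simp at hβ
  · apply iff_of_false
    · obtain ⟨x, y, hx, hy, hxy⟩ := ends_not_at G₂ e₂.prop
      have hι : ι₂ w e₂.val = e := ι₂_eq_of_β_inr w hβ
      have hends : G.ends e = s(σ₂ w x hx, σ₂ w y hy) := by
        rw [← hι]; exact ends_ι₂_not_mem w e₂.prop hx hy hxy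
      rw [mem_edgeCut_iff hends]
      rintro (⟨h1, h2⟩ | ⟨h1, h2⟩) <;> exact h2 (mem_UB_σ₂ w D₁ D₂)
    · rintro ⟨f, rfl⟩
      rw [Equiv.apply_symm_apply] at hβ
      simp at hβ
  · apply iff_of_true
    · obtain ⟨x, hx, hxe⟩ := ends_at G₁ e₀.prop
      obtain ⟨y, hy, hye⟩ := ends_at G₂ (w.π e₀).prop
      have hι : ι₁ w e₀.val = e := ι₁_eq_of_β_inr w hβ
      have hends : G.ends e = s(σ₁ w x hx, σ₂ w y hy) := by
        rw [← hι]; exact ends_ι₁_mem w e₀.prop hx hy hxe hye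
      rw [mem_edgeCut_iff hends]
      exact Or.inr ⟨mem_UB_σ₂ w D₁ D₂, not_mem_UB_σ₁ w D₁ D₂⟩
    · refine ⟨e₀, ?_⟩
      show w.β.symm (Sum.inr e₀) = e
      rw [← hβ, Equiv.symm_apply_apply]

lemma cutB' :
    G.edgeCut ((combined w D₁ D₂).sideSet (Sum.inr (t2 w D₂)) (Sum.inl (t1 w D₁))) =
      Set.range (fun e₀ : {e : G₁.E // w.v₁ ∈ G₁.ends e} => w.β.symm (Sum.inr e₀)) := by
  ext e
  rcases hβ : w.β e with (e₁ | e₂) | e₀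
  · apply iff_of_false
    · obtain ⟨x, y, hx, hy, hxy⟩ := ends_not_at G₁ e₁.prop
      have hι : ι₁ w e₁.val = e := ι₁_eq_of_β_inl w hβ
      have hends : G.ends e = s(σ₁ w x hx, σ₁ w y hy) := by
        rw [← hι]; exact ends_ι₁_not_mem w e₁.prop hx hy hxy
      rw [mem_edgeCut_iff hends]
      rintro (⟨h1, h2⟩ | ⟨h1, h2⟩) <;> exact h2 (mem_UB'_σ₁ w D₁ D₂)
    · rintro ⟨f, rfl⟩
      rw [Equiv.apply_symm_apply] at hβ
      simp at hβ
  · apply iff_of_false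
    · obtain ⟨x, y, hx, hy, hxy⟩ := ends_not_at G₂ e₂.prop
      have hι : ι₂ w e₂.val = e := ι₂_eq_of_β_inr w hβ
      have hends : G.ends e = s(σ₂ w x hx, σ₂ w y hy) := by
        rw [← hι]; exact ends_ι₂_not_mem w e₂.prop hx hy hxy
      rw [mem_edgeCut_iff hends]
      rintro (⟨h1, h2⟩ | ⟨h1, h2⟩) <;> exact not_mem_UB'_σ₂ w D₁ D₂ h1
    · rintro ⟨f, rfl⟩
      rw [Equiv.apply_symm_apply] at hβ
      simp at hβ
  · apply iff_of_true
    · obtain ⟨x, hx, hxe⟩ := ends_at G₁ e₀.prop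
      obtain ⟨y, hy, hye⟩ := ends_at G₂ (w.π e₀).prop
      have hι : ι₁ w e₀.val = e := ι₁_eq_of_β_inr w hβ
      have hends : G.ends e = s(σ₁ w x hx, σ₂ w y hy) := by
        rw [← hι]; exact ends_ι₁_mem w e₀.prop hx hy hxe hye
      rw [mem_edgeCut_iff hends]
      exact Or.inl ⟨mem_UB'_σ₁ w D₁ D₂, not_mem_UB'_σ₂ w D₁ D₂⟩
    · refine ⟨e₀, ?_⟩
      show w.β.symm (Sum.inr e₀) = e
      rw [← hβ, Equiv.symm_apply_apply]

lemma cutA_ncard {a b : D₁.T} :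
    (G.edgeCut ((combined w D₁ D₂).sideSet (Sum.inl a) (Sum.inl b))).ncard =
      (G₁.edgeCut (D₁.sideSet a b)).ncard := by
  rw [cutA]; exact Set.ncard_image_of_injective _ (ι₁_inj w)

lemma cutA₂_ncard {a b : D₂.T} :
    (G.edgeCut ((combined w D₁ D₂).sideSet (Sum.inr a) (Sum.inr b))).ncard =
      (G₂.edgeCut (D₂.sideSet a b)).ncard := by
  rw [cutA₂]; exact Set.ncard_image_of_injective _ (ι₂_inj w)

lemma range_merged_ncard :
    (Set.range (fun e₀ : {e : G₁.E // w.v₁ ∈ G₁.ends e} => w.β.symm (Sum.inr e₀))).ncard = k := by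
  have hinj : Function.Injective
      (fun e₀ : {e : G₁.E // w.v₁ ∈ G₁.ends e} => w.β.symm (Sum.inr e₀)) :=
    fun a b h => Sum.inr_injective (w.β.symm.injective h)
  rw [← Nat.card_coe_set_eq, Nat.card_range_of_injective hinj]
  exact w.deg₁

lemma cutB_ncard :
    (G.edgeCut ((combined w D₁ D₂).sideSet (Sum.inl (t1 w D₁)) (Sum.inr (t2 w D₂)))).ncard
      = k := by
  rw [cutB]; exact range_merged_ncard w

lemma cutB'_ncard :
    (G.edgeCut ((combined w D₁ D₂).sideSet (Sum.inr (t2 w D₂)) (Sum.inl (t1 w D₁)))).ncard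
      = k := by
  rw [cutB']; exact range_merged_ncard w

lemma sSup_insert_union (k : ℕ) (A B : Set ℕ) (hA : BddAbove A) (hB : BddAbove B) :
    sSup (insert k (A ∪ B)) = max k (max (sSup A) (sSup B)) := by
  have hbIns : BddAbove (insert k (A ∪ B)) := (hA.union hB).insert k
  apply le_antisymm
  · apply csSup_le ⟨k, Set.mem_insert _ _⟩
    intro n hn
    simp only [Set.mem_insert_iff, Set.mem_union] at hn
    rcases hn with rfl | h | h
    · exact le_max_left _ _
    · exact le_trans (le_csSup hA h) (le_trans (le_max_left _ _) (le_max_right _ _))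
    · exact le_trans (le_csSup hB h) (le_trans (le_max_right _ _) (le_max_right _ _))
  · refine max_le (le_csSup hbIns (Set.mem_insert _ _)) (max_le ?_ ?_)
    · rcases A.eq_empty_or_nonempty with rfl | hne
      · rw [csSup_empty]; exact bot_le
      · exact csSup_le_csSup hbIns hne (fun n hn => Set.mem_insert_of_mem _ (Or.inl hn))
    · rcases B.eq_empty_or_nonempty with rfl | hne
      · rw [csSup_empty]; exact bot_le
      · exact csSup_le_csSup hbIns hne (fun n hn => Set.mem_insert_of_mem _ (Or.inr hn))

lemma combined_adhesion :
    (combined w D₁ D₂).adhesion = max k (max D₁.adhesion D₂.adhesion) := by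
  have hadh : (combined w D₁ D₂).adhesion =
      sSup {n | ∃ u v : (combined w D₁ D₂).T, (combined w D₁ D₂).tree.Adj u v ∧
        n = (G.edgeCut ((combined w D₁ D₂).sideSet u v)).ncard} := rfl
  have hadh₁ : D₁.adhesion =
      sSup {n | ∃ u v : D₁.T, D₁.tree.Adj u v ∧
        n = (G₁.edgeCut (D₁.sideSet u v)).ncard} := rfl
  have hadh₂ : D₂.adhesion =
      sSup {n | ∃ u v : D₂.T, D₂.tree.Adj u v ∧
        n = (G₂.edgeCut (D₂.sideSet u v)).ncard} := rfl
  have hset : {n | ∃ u v : (combined w D₁ D₂).T, (combined w D₁ D₂).tree.Adj u v ∧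
      n = (G.edgeCut ((combined w D₁ D₂).sideSet u v)).ncard} =
      insert k ({n | ∃ u v : D₁.T, D₁.tree.Adj u v ∧
        n = (G₁.edgeCut (D₁.sideSet u v)).ncard} ∪
        {n | ∃ u v : D₂.T, D₂.tree.Adj u v ∧
        n = (G₂.edgeCut (D₂.sideSet u v)).ncard}) := by
    ext n
    simp only [Set.mem_insert_iff, Set.mem_union, Set.mem_setOf_eq]
    constructor
    · rintro ⟨u, v, hadj, rfl⟩
      rcases u with a | a <;> rcases v with b | b
      · exact Or.inr (Or.inl ⟨a, b, hadj, cutA_ncard w D₁ D₂⟩)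
      · obtain ⟨rfl, rfl⟩ : a = t1 w D₁ ∧ b = t2 w D₂ := hadj
        exact Or.inl (cutB_ncard w D₁ D₂)
      · obtain ⟨rfl, rfl⟩ : a = t2 w D₂ ∧ b = t1 w D₁ := hadj
        exact Or.inl (cutB'_ncard w D₁ D₂)
      · exact Or.inr (Or.inr ⟨a, b, hadj, cutA₂_ncard w D₁ D₂⟩)
    · rintro (rfl | ⟨a, b, hadj, rfl⟩ | ⟨a, b, hadj, rfl⟩)
      · exact ⟨Sum.inl (t1 w D₁), Sum.inr (t2 w D₂), ⟨rfl, rfl⟩,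
          (cutB_ncard w D₁ D₂).symm⟩
      · exact ⟨Sum.inl a, Sum.inl b, hadj, (cutA_ncard w D₁ D₂).symm⟩
      · exact ⟨Sum.inr a, Sum.inr b, hadj, (cutA₂_ncard w D₁ D₂).symm⟩
  have hb₁ : BddAbove {n | ∃ u v : D₁.T, D₁.tree.Adj u v ∧
      n = (G₁.edgeCut (D₁.sideSet u v)).ncard} :=
    Set.Finite.bddAbove (Set.Finite.subset
      (Set.finite_range (fun p : D₁.T × D₁.T => (G₁.edgeCut (D₁.sideSet p.1 p.2)).ncard))
      (by rintro n ⟨u, v, -, rfl⟩; exact ⟨(u, v), rfl⟩))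
  have hb₂ : BddAbove {n | ∃ u v : D₂.T, D₂.tree.Adj u v ∧
      n = (G₂.edgeCut (D₂.sideSet u v)).ncard} :=
    Set.Finite.bddAbove (Set.Finite.subset
      (Set.finite_range (fun p : D₂.T × D₂.T => (G₂.edgeCut (D₂.sideSet p.1 p.2)).ncard))
      (by rintro n ⟨u, v, -, rfl⟩; exact ⟨(u, v), rfl⟩))
  rw [hadh, hadh₁, hadh₂, hset, sSup_insert_union k _ _ hb₁ hb₂]

end Combined4


section Torso1

variable {k : ℕ} {G G₁ G₂ : Multigraph}
variable (w : EdgeSumWitness k G G₁ G₂) (D₁ : TreeCutDecomp G₁) (D₂ : TreeCutDecomp G₂)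

/-- Collapse of `G`-vertices to `G₁`-vertices. -/
def ρ : G.V → G₁.V := fun x => Sum.elim Subtype.val (fun _ => w.v₁) (w.α x)

lemma ρ_σ₁ {x : G₁.V} {hx : x ≠ w.v₁} : ρ w (σ₁ w x hx) = x := by
  unfold ρ
  rw [α_σ₁]
  rfl

lemma ρ_σ₂ {y : G₂.V} {hy : y ≠ w.v₂} : ρ w (σ₂ w y hy) = w.v₁ := by
  unfold ρ
  rw [α_σ₂]
  rfl

lemma x_eq_σ₁ {x : G.V} {u : {x : G₁.V // x ≠ w.v₁}} (hα : w.α x = Sum.inl u) :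
    x = σ₁ w u.val u.prop := by
  unfold σ₁
  rw [show (⟨u.val, u.prop⟩ : {x : G₁.V // x ≠ w.v₁}) = u from rfl, ← hα,
    Equiv.symm_apply_apply]

lemma x_eq_σ₂ {x : G.V} {u : {y : G₂.V // y ≠ w.v₂}} (hα : w.α x = Sum.inr u) :
    x = σ₂ w u.val u.prop := by
  unfold σ₂
  rw [show (⟨u.val, u.prop⟩ : {y : G₂.V // y ≠ w.v₂}) = u from rfl, ← hα,
    Equiv.symm_apply_apply]

lemma ρ_mem_bag {a : D₁.T} {x : G.V} (hx : x ∈ newBag w D₁ D₂ (Sum.inl a)) :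
    ρ w x ∈ D₁.bag a := by
  replace hx : Sum.elim (fun u : {x : G₁.V // x ≠ w.v₁} => u.val ∈ D₁.bag a)
      (fun _ => False) (w.α x) := hx
  unfold ρ
  rcases hα : w.α x with u | u <;> rw [hα] at hx
  · exact hx
  · exact hx.elim

/-- `Sum.inl` as a homomorphism of vertex-deleted graphs. -/
def homLdelAt (a : D₁.T) :
    Multigraph.delAt D₁.tree a →g Multigraph.delAt (newTree w D₁ D₂) (Sum.inl a) where
  toFun := Sum.inl
  map_rel' := by
    intro x y h
    exact ⟨h.1, fun hh => h.2.1 (Sum.inl_injective hh), fun hh => h.2.2 (Sum.inl_injective hh)⟩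

/-- `Sum.inr` as a homomorphism into the combined tree with a left vertex deleted. -/
def homRdelAt (a : D₁.T) :
    D₂.tree →g Multigraph.delAt (newTree w D₁ D₂) (Sum.inl a) where
  toFun := Sum.inr
  map_rel' := by
    intro x y h
    exact ⟨h, Sum.inr_ne_inl, Sum.inr_ne_inl⟩

/-- The vertex map from the torso of the combined decomposition at `Sum.inl a` to the
torso of `D₁` at `a`. -/
noncomputable def torsoMapL (a : D₁.T) :
    ((combined w D₁ D₂).torso (Sum.inl a)).V → (D₁.torso a).V := fun z =>
  match z with
  | Sum.inl x => Sum.inl ⟨ρ w x.val, ρ_mem_bag w D₁ D₂ x.prop⟩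
  | Sum.inr ⟨Sum.inl u, hu⟩ => Sum.inr ⟨u, hu⟩
  | Sum.inr ⟨Sum.inr _, hu⟩ => Sum.inl ⟨w.v₁, by
      obtain ⟨h1, -⟩ : a = t1 w D₁ ∧ _ = t2 w D₂ := hu
      rw [h1]; exact mem_t1 w D₁⟩

/-- Compatibility of projections. -/
lemma proj_comm (a : D₁.T) (x : G.V) :
    torsoMapL w D₁ D₂ a ((combined w D₁ D₂).proj (Sum.inl a) x) = D₁.proj a (ρ w x) := by
  rcases hα : w.α x with u | u
  · have hρ : ρ w x = u.val := by unfold ρ; rw [hα]; rfl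
    by_cases hmem : u.val ∈ D₁.bag a
    · have hbag : x ∈ (combined w D₁ D₂).bag (Sum.inl a) := by
        show Sum.elim (fun u : {x : G₁.V // x ≠ w.v₁} => u.val ∈ D₁.bag a)
          (fun _ => False) (w.α x)
        rw [hα]; exact hmem
      rw [proj_eq_inl (combined w D₁ D₂) hbag, hρ, proj_eq_inl D₁ hmem]
      simp only [torsoMapL]
      exact congrArg Sum.inl (Subtype.ext hρ)
    · have hnot : x ∉ (combined w D₁ D₂).bag (Sum.inl a) := by
        intro hbag
        replace hbag : Sum.elim (fun u : {x : G₁.V // x ≠ w.v₁} => u.val ∈ D₁.bag a)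
          (fun _ => False) (w.α x) := hbag
        rw [hα] at hbag
        exact hmem hbag
      rw [hρ]
      rcases hproj : D₁.proj a u.val with p | c
      · rw [TreeCutDecomp.proj, dif_neg hmem] at hproj
        exact absurd hproj (by simp)
      · obtain ⟨s₁, hs₁, hr₁⟩ := proj_inr_spec D₁ hmem hproj
        have hbag' : x ∈ (combined w D₁ D₂).bag (Sum.inl s₁) := by
          show Sum.elim (fun u : {x : G₁.V // x ≠ w.v₁} => u.val ∈ D₁.bag s₁)
            (fun _ => False) (w.α x)
          rw [hα]; exact hs₁
        have hadjc : (combined w D₁ D₂).tree.Adj (Sum.inl a) (Sum.inl c.val) := c.prop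
        have hCproj : (combined w D₁ D₂).proj (Sum.inl a) x =
            Sum.inr ⟨Sum.inl c.val, hadjc⟩ :=
          proj_eq_inr (combined w D₁ D₂) hnot hadjc
            ⟨Sum.inl s₁, hbag', hr₁.map (homLdelAt w D₁ D₂ a)⟩
        rw [hCproj]
        rfl
  · have hρ : ρ w x = w.v₁ := by unfold ρ; rw [hα]; rfl
    have hnot : x ∉ (combined w D₁ D₂).bag (Sum.inl a) := by
      intro hbag
      replace hbag : Sum.elim (fun u : {x : G₁.V // x ≠ w.v₁} => u.val ∈ D₁.bag a)
        (fun _ => False) (w.α x) := hbag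
      rw [hα] at hbag
      exact hbag
    obtain ⟨s₂, hs₂⟩ := D₂.covers u.val
    have hbag₂ : x ∈ (combined w D₁ D₂).bag (Sum.inr s₂) := by
      show Sum.elim (fun _ => False)
        (fun u : {y : G₂.V // y ≠ w.v₂} => u.val ∈ D₂.bag s₂) (w.α x)
      rw [hα]; exact hs₂
    rw [hρ]
    by_cases hmem : w.v₁ ∈ D₁.bag a
    · have hat : a = t1 w D₁ := bag_unique D₁ hmem (mem_t1 w D₁)
      have hadj : (combined w D₁ D₂).tree.Adj (Sum.inl a) (Sum.inr (t2 w D₂)) := ⟨hat, rfl⟩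
      have hreach : (Multigraph.delAt (newTree w D₁ D₂) (Sum.inl a)).Reachable
          (Sum.inr s₂) (Sum.inr (t2 w D₂)) :=
        (D₂.isTree.isConnected.preconnected s₂ (t2 w D₂)).map (homRdelAt w D₁ D₂ a)
      have hCproj : (combined w D₁ D₂).proj (Sum.inl a) x =
          Sum.inr ⟨Sum.inr (t2 w D₂), hadj⟩ :=
        proj_eq_inr (combined w D₁ D₂) hnot hadj ⟨Sum.inr s₂, hbag₂, hreach⟩
      rw [hCproj, proj_eq_inl D₁ hmem]
      rfl
    · have hat : a ≠ t1 w D₁ := fun h => hmem (by rw [h]; exact mem_t1 w D₁)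
      rcases hproj : D₁.proj a w.v₁ with p | c
      · rw [TreeCutDecomp.proj, dif_neg hmem] at hproj
        exact absurd hproj (by simp)
      · obtain ⟨s₁, hs₁, hr₁⟩ := proj_inr_spec D₁ hmem hproj
        have hs₁t : s₁ = t1 w D₁ := bag_unique D₁ hs₁ (mem_t1 w D₁)
        subst hs₁t
        have hreach2 : (Multigraph.delAt (newTree w D₁ D₂) (Sum.inl a)).Reachable
            (Sum.inr s₂) (Sum.inl c.val) := by
          have h1 : (Multigraph.delAt (newTree w D₁ D₂) (Sum.inl a)).Reachable
              (Sum.inr s₂) (Sum.inr (t2 w D₂)) :=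
            (D₂.isTree.isConnected.preconnected s₂ (t2 w D₂)).map (homRdelAt w D₁ D₂ a)
          have h2 : (Multigraph.delAt (newTree w D₁ D₂) (Sum.inl a)).Adj
              (Sum.inr (t2 w D₂)) (Sum.inl (t1 w D₁)) :=
            ⟨⟨rfl, rfl⟩, Sum.inr_ne_inl, fun hh => hat (Sum.inl_injective hh).symm⟩
          have h3 : (Multigraph.delAt (newTree w D₁ D₂) (Sum.inl a)).Reachable
              (Sum.inl (t1 w D₁)) (Sum.inl c.val) := hr₁.map (homLdelAt w D₁ D₂ a)
          exact h1.trans (h2.reachable.trans h3)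
        have hadjc : (combined w D₁ D₂).tree.Adj (Sum.inl a) (Sum.inl c.val) := c.prop
        have hCproj : (combined w D₁ D₂).proj (Sum.inl a) x =
            Sum.inr ⟨Sum.inl c.val, hadjc⟩ :=
          proj_eq_inr (combined w D₁ D₂) hnot hadjc ⟨Sum.inr s₂, hbag₂, hreach2⟩
        rw [hCproj]
        rfl

lemma torsoMapL_bij (a : D₁.T) : Function.Bijective (torsoMapL w D₁ D₂ a) := by
  constructor
  · rintro (x | ⟨(u | u), hu⟩) (x' | ⟨(u' | u'), hu'⟩) h <;> simp only [torsoMapL] at h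
    · injection h with h
      have hρρ : ρ w x.val = ρ w x'.val := congrArg Subtype.val h
      have hx := x.prop
      have hx' := x'.prop
      replace hx : Sum.elim (fun u : {x : G₁.V // x ≠ w.v₁} => u.val ∈ D₁.bag a)
          (fun _ => False) (w.α x.val) := hx
      replace hx' : Sum.elim (fun u : {x : G₁.V // x ≠ w.v₁} => u.val ∈ D₁.bag a)
          (fun _ => False) (w.α x'.val) := hx'
      rcases hα : w.α x.val with u | u <;> rw [hα] at hx
      swap
      · exact hx.elim
      rcases hα' : w.α x'.val with u' | u' <;> rw [hα'] at hx'
      swap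
      · exact hx'.elim
      have h1 : ρ w x.val = u.val := by unfold ρ; rw [hα]; rfl
      have h2 : ρ w x'.val = u'.val := by unfold ρ; rw [hα']; rfl
      have huu : u = u' := Subtype.ext (by rw [← h1, ← h2, hρρ])
      apply congrArg
      apply Subtype.ext
      rw [x_eq_σ₁ w hα, x_eq_σ₁ w hα']
      unfold σ₁
      rw [show (⟨u.val, u.prop⟩ : {x : G₁.V // x ≠ w.v₁}) = u from rfl,
        show (⟨u'.val, u'.prop⟩ : {x : G₁.V // x ≠ w.v₁}) = u' from rfl, huu]
    · injection h
    · exfalso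
      injection h with h
      have hρv : ρ w x.val = w.v₁ := congrArg Subtype.val h
      have hx := x.prop
      replace hx : Sum.elim (fun u : {x : G₁.V // x ≠ w.v₁} => u.val ∈ D₁.bag a)
          (fun _ => False) (w.α x.val) := hx
      rcases hα : w.α x.val with u2 | u2 <;> rw [hα] at hx
      · have h1 : ρ w x.val = u2.val := by unfold ρ; rw [hα]; rfl
        exact u2.prop (by rw [← h1, hρv])
      · exact hx
    · injection h
    · injection h with h
      have huu : u = u' := congrArg Subtype.val h
      subst huu
      rfl
    · injection h
    · exfalso
      injection h with h
      have hρv : ρ w x'.val = w.v₁ := (congrArg Subtype.val h).symm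
      have hx' := x'.prop
      replace hx' : Sum.elim (fun u : {x : G₁.V // x ≠ w.v₁} => u.val ∈ D₁.bag a)
          (fun _ => False) (w.α x'.val) := hx'
      rcases hα' : w.α x'.val with v | v <;> rw [hα'] at hx'
      · have h2 : ρ w x'.val = v.val := by unfold ρ; rw [hα']; rfl
        exact v.prop (by rw [← h2, hρv])
      · exact hx'
    · injection h
    · obtain ⟨-, h2⟩ : a = t1 w D₁ ∧ u = t2 w D₂ := hu
      obtain ⟨-, h2'⟩ : a = t1 w D₁ ∧ u' = t2 w D₂ := hu'
      subst h2; subst h2'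
      rfl
  · rintro (⟨p, hp⟩ | ⟨u, hu⟩)
    · by_cases hpv : p = w.v₁
      · subst hpv
        have hat : a = t1 w D₁ := bag_unique D₁ hp (mem_t1 w D₁)
        have hadj : (combined w D₁ D₂).tree.Adj (Sum.inl a) (Sum.inr (t2 w D₂)) :=
          ⟨hat, rfl⟩
        exact ⟨Sum.inr ⟨Sum.inr (t2 w D₂), hadj⟩, rfl⟩
      · have hbag : σ₁ w p hpv ∈ (combined w D₁ D₂).bag (Sum.inl a) := by
          show Sum.elim (fun u : {x : G₁.V // x ≠ w.v₁} => u.val ∈ D₁.bag a)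
            (fun _ => False) (w.α (σ₁ w p hpv))
          rw [α_σ₁]; exact hp
        exact ⟨Sum.inl ⟨σ₁ w p hpv, hbag⟩, congrArg Sum.inl (Subtype.ext (ρ_σ₁ w))⟩
    · exact ⟨Sum.inr ⟨Sum.inl u, hu⟩, rfl⟩


lemma proj_ends_eq (a : D₁.T) (e : G.E) :
    Sym2.map (torsoMapL w D₁ D₂ a)
        (Sym2.map ((combined w D₁ D₂).proj (Sum.inl a)) (G.ends e)) =
      Sym2.map (D₁.proj a) (Sym2.map (ρ w) (G.ends e)) := by
  obtain ⟨p, q, hpq⟩ := exists_eq_mk (G.ends e)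
  rw [hpq, Sym2.map_pair_eq, Sym2.map_pair_eq]
  show s(torsoMapL w D₁ D₂ a ((combined w D₁ D₂).proj (Sum.inl a) p),
      torsoMapL w D₁ D₂ a ((combined w D₁ D₂).proj (Sum.inl a) q)) = _
  exact congrArg₂ (fun x y => s(x, y)) (proj_comm w D₁ D₂ a p) (proj_comm w D₁ D₂ a q)

lemma torso_diag_iff (a : D₁.T) (e : G.E) :
    (Sym2.map ((combined w D₁ D₂).proj (Sum.inl a)) (G.ends e)).IsDiag ↔
      (Sym2.map (D₁.proj a) (Sym2.map (ρ w) (G.ends e))).IsDiag := by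
  exact (Sym2.isDiag_map (torsoMapL_bij w D₁ D₂ a).injective).symm.trans
    (Iff.of_eq (congrArg Sym2.IsDiag (proj_ends_eq w D₁ D₂ a e)))

lemma map_ρ_ends_ι₁ (f : G₁.E) :
    Sym2.map (ρ w) (G.ends (ι₁ w f)) = G₁.ends f := by
  by_cases hv : w.v₁ ∈ G₁.ends f
  · obtain ⟨x, hx, hxe⟩ := ends_at G₁ hv
    obtain ⟨y, hy, hye⟩ := ends_at G₂ (w.π ⟨f, hv⟩).prop
    rw [ends_ι₁_mem w hv hx hy hxe hye, Sym2.map_pair_eq, ρ_σ₁, ρ_σ₂, hxe]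
  · obtain ⟨x, y, hx, hy, hxy⟩ := ends_not_at G₁ hv
    rw [ends_ι₁_not_mem w hv hx hy hxy, Sym2.map_pair_eq, ρ_σ₁, ρ_σ₁, hxy]

/-- The edge map from the torso of `D₁` at `a` into the torso of the combined
decomposition at `Sum.inl a`. -/
noncomputable def ψL (a : D₁.T) (f : (D₁.torso a).E) :
    ((combined w D₁ D₂).torso (Sum.inl a)).E :=
  ⟨ι₁ w f.val, by
    rw [torso_diag_iff w D₁ D₂ a, map_ρ_ends_ι₁ w]
    exact f.prop⟩

lemma ψL_bij (a : D₁.T) : Function.Bijective (ψL w D₁ D₂ a) := by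
  constructor
  · intro f f' h
    exact Subtype.ext (ι₁_inj w (congrArg Subtype.val h))
  · rintro ⟨e, he⟩
    rcases hβ : w.β e with (e₁ | e₂) | e₀
    · have hι := ι₁_eq_of_β_inl w hβ
      have hnd : ¬ (Sym2.map (D₁.proj a) (G₁.ends e₁.val)).IsDiag := by
        intro hd
        apply he
        rw [torso_diag_iff w D₁ D₂ a, ← hι, map_ρ_ends_ι₁ w]
        exact hd
      exact ⟨⟨e₁.val, hnd⟩, Subtype.ext hι⟩
    · exfalso
      apply he
      have h2 : Sym2.map (ρ w) (G.ends e) = s(w.v₁, w.v₁) := by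
        obtain ⟨x, y, hx, hy, hxy⟩ := ends_not_at G₂ e₂.prop
        rw [← ι₂_eq_of_β_inr w hβ, ends_ι₂_not_mem w e₂.prop hx hy hxy,
          Sym2.map_pair_eq, ρ_σ₂, ρ_σ₂]
      rw [torso_diag_iff w D₁ D₂ a, h2, Sym2.map_pair_eq]
      exact Sym2.mk_isDiag_iff.2 rfl
    · have hι := ι₁_eq_of_β_inr w hβ
      have hnd : ¬ (Sym2.map (D₁.proj a) (G₁.ends e₀.val)).IsDiag := by
        intro hd
        apply he
        rw [torso_diag_iff w D₁ D₂ a, ← hι, map_ρ_ends_ι₁ w]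
        exact hd
      exact ⟨⟨e₀.val, hnd⟩, Subtype.ext hι⟩

/-- The torso of the combined decomposition at a left node is isomorphic to the
corresponding torso of `D₁`. -/
noncomputable def torsoIsoL (a : D₁.T) :
    Iso ((combined w D₁ D₂).torso (Sum.inl a)) (D₁.torso a) where
  vmap := Equiv.ofBijective _ (torsoMapL_bij w D₁ D₂ a)
  emap := (Equiv.ofBijective _ (ψL_bij w D₁ D₂ a)).symm
  ends_map := by
    intro e
    obtain ⟨f, rfl⟩ := (Equiv.ofBijective _ (ψL_bij w D₁ D₂ a)).surjective e
    rw [Equiv.symm_apply_apply]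
    show Sym2.map (D₁.proj a) (G₁.ends f.val) =
      Sym2.map (torsoMapL w D₁ D₂ a)
        (Sym2.map ((combined w D₁ D₂).proj (Sum.inl a)) (G.ends (ι₁ w f.val)))
    rw [proj_ends_eq w D₁ D₂ a, map_ρ_ends_ι₁ w]

lemma torsoIsoL_core (a : D₁.T) (x : ((combined w D₁ D₂).torso (Sum.inl a)).V)
    (hx : x ∈ (combined w D₁ D₂).torsoCore (Sum.inl a)) :
    (torsoIsoL w D₁ D₂ a).vmap x ∈ D₁.torsoCore a := by
  obtain ⟨x', rfl⟩ := hx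
  exact ⟨⟨ρ w x'.val, ρ_mem_bag w D₁ D₂ x'.prop⟩, rfl⟩

end Torso1


section Torso2

variable {k : ℕ} {G G₁ G₂ : Multigraph}
variable (w : EdgeSumWitness k G G₁ G₂) (D₁ : TreeCutDecomp G₁) (D₂ : TreeCutDecomp G₂)

/-- Collapse of `G`-vertices to `G₂`-vertices. -/
def ρ₂ : G.V → G₂.V := fun x => Sum.elim (fun _ => w.v₂) Subtype.val (w.α x)

lemma ρ₂_σ₂ {y : G₂.V} {hy : y ≠ w.v₂} : ρ₂ w (σ₂ w y hy) = y := by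
  unfold ρ₂
  rw [α_σ₂]
  rfl

lemma ρ₂_σ₁ {x : G₁.V} {hx : x ≠ w.v₁} : ρ₂ w (σ₁ w x hx) = w.v₂ := by
  unfold ρ₂
  rw [α_σ₁]
  rfl

lemma ρ₂_mem_bag {a : D₂.T} {x : G.V} (hx : x ∈ newBag w D₁ D₂ (Sum.inr a)) :
    ρ₂ w x ∈ D₂.bag a := by
  replace hx : Sum.elim (fun _ => False)
      (fun u : {y : G₂.V // y ≠ w.v₂} => u.val ∈ D₂.bag a) (w.α x) := hx
  unfold ρ₂
  rcases hα : w.α x with u | u <;> rw [hα] at hx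
  · exact hx.elim
  · exact hx

/-- `Sum.inr` as a homomorphism of vertex-deleted graphs. -/
def homRdelAt₂ (a : D₂.T) :
    Multigraph.delAt D₂.tree a →g Multigraph.delAt (newTree w D₁ D₂) (Sum.inr a) where
  toFun := Sum.inr
  map_rel' := by
    intro x y h
    exact ⟨h.1, fun hh => h.2.1 (Sum.inr_injective hh), fun hh => h.2.2 (Sum.inr_injective hh)⟩

/-- `Sum.inl` as a homomorphism into the combined tree with a right vertex deleted. -/
def homLdelAt₂ (a : D₂.T) :
    D₁.tree →g Multigraph.delAt (newTree w D₁ D₂) (Sum.inr a) where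
  toFun := Sum.inl
  map_rel' := by
    intro x y h
    exact ⟨h, Sum.inl_ne_inr, Sum.inl_ne_inr⟩

/-- The vertex map from the torso of the combined decomposition at `Sum.inr a` to the
torso of `D₂` at `a`. -/
noncomputable def torsoMapR (a : D₂.T) :
    ((combined w D₁ D₂).torso (Sum.inr a)).V → (D₂.torso a).V := fun z =>
  match z with
  | Sum.inl x => Sum.inl ⟨ρ₂ w x.val, ρ₂_mem_bag w D₁ D₂ x.prop⟩
  | Sum.inr ⟨Sum.inr u, hu⟩ => Sum.inr ⟨u, hu⟩
  | Sum.inr ⟨Sum.inl _, hu⟩ => Sum.inl ⟨w.v₂, by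
      obtain ⟨h1, -⟩ : a = t2 w D₂ ∧ _ = t1 w D₁ := hu
      rw [h1]; exact mem_t2 w D₂⟩

/-- Compatibility of projections, right version. -/
lemma proj_comm₂ (a : D₂.T) (x : G.V) :
    torsoMapR w D₁ D₂ a ((combined w D₁ D₂).proj (Sum.inr a) x) = D₂.proj a (ρ₂ w x) := by
  rcases hα : w.α x with u | u
  · have hρ : ρ₂ w x = w.v₂ := by unfold ρ₂; rw [hα]; rfl
    have hnot : x ∉ (combined w D₁ D₂).bag (Sum.inr a) := by
      intro hbag
      replace hbag : Sum.elim (fun _ => False)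
        (fun u : {y : G₂.V // y ≠ w.v₂} => u.val ∈ D₂.bag a) (w.α x) := hbag
      rw [hα] at hbag
      exact hbag
    obtain ⟨s₁, hs₁⟩ := D₁.covers u.val
    have hbag₁ : x ∈ (combined w D₁ D₂).bag (Sum.inl s₁) := by
      show Sum.elim (fun u : {x : G₁.V // x ≠ w.v₁} => u.val ∈ D₁.bag s₁)
        (fun _ => False) (w.α x)
      rw [hα]; exact hs₁
    rw [hρ]
    by_cases hmem : w.v₂ ∈ D₂.bag a
    · have hat : a = t2 w D₂ := bag_unique D₂ hmem (mem_t2 w D₂)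
      have hadj : (combined w D₁ D₂).tree.Adj (Sum.inr a) (Sum.inl (t1 w D₁)) := ⟨hat, rfl⟩
      have hreach : (Multigraph.delAt (newTree w D₁ D₂) (Sum.inr a)).Reachable
          (Sum.inl s₁) (Sum.inl (t1 w D₁)) :=
        (D₁.isTree.isConnected.preconnected s₁ (t1 w D₁)).map (homLdelAt₂ w D₁ D₂ a)
      have hCproj : (combined w D₁ D₂).proj (Sum.inr a) x =
          Sum.inr ⟨Sum.inl (t1 w D₁), hadj⟩ :=
        proj_eq_inr (combined w D₁ D₂) hnot hadj ⟨Sum.inl s₁, hbag₁, hreach⟩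
      rw [hCproj, proj_eq_inl D₂ hmem]
      rfl
    · have hat : a ≠ t2 w D₂ := fun h => hmem (by rw [h]; exact mem_t2 w D₂)
      rcases hproj : D₂.proj a w.v₂ with p | c
      · rw [TreeCutDecomp.proj, dif_neg hmem] at hproj
        exact absurd hproj (by simp)
      · obtain ⟨s₂, hs₂, hr₂⟩ := proj_inr_spec D₂ hmem hproj
        have hs₂t : s₂ = t2 w D₂ := bag_unique D₂ hs₂ (mem_t2 w D₂)
        subst hs₂t
        have hreach2 : (Multigraph.delAt (newTree w D₁ D₂) (Sum.inr a)).Reachable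
            (Sum.inl s₁) (Sum.inr c.val) := by
          have h1 : (Multigraph.delAt (newTree w D₁ D₂) (Sum.inr a)).Reachable
              (Sum.inl s₁) (Sum.inl (t1 w D₁)) :=
            (D₁.isTree.isConnected.preconnected s₁ (t1 w D₁)).map (homLdelAt₂ w D₁ D₂ a)
          have h2 : (Multigraph.delAt (newTree w D₁ D₂) (Sum.inr a)).Adj
              (Sum.inl (t1 w D₁)) (Sum.inr (t2 w D₂)) :=
            ⟨⟨rfl, rfl⟩, Sum.inl_ne_inr,
              fun hh => hat (Sum.inr_injective hh).symm⟩
          have h3 : (Multigraph.delAt (newTree w D₁ D₂) (Sum.inr a)).Reachable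
              (Sum.inr (t2 w D₂)) (Sum.inr c.val) := hr₂.map (homRdelAt₂ w D₁ D₂ a)
          exact h1.trans (h2.reachable.trans h3)
        have hadjc : (combined w D₁ D₂).tree.Adj (Sum.inr a) (Sum.inr c.val) := c.prop
        have hCproj : (combined w D₁ D₂).proj (Sum.inr a) x =
            Sum.inr ⟨Sum.inr c.val, hadjc⟩ :=
          proj_eq_inr (combined w D₁ D₂) hnot hadjc ⟨Sum.inl s₁, hbag₁, hreach2⟩
        rw [hCproj]
        rfl
  · have hρ : ρ₂ w x = u.val := by unfold ρ₂; rw [hα]; rfl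
    by_cases hmem : u.val ∈ D₂.bag a
    · have hbag : x ∈ (combined w D₁ D₂).bag (Sum.inr a) := by
        show Sum.elim (fun _ => False)
          (fun u : {y : G₂.V // y ≠ w.v₂} => u.val ∈ D₂.bag a) (w.α x)
        rw [hα]; exact hmem
      rw [proj_eq_inl (combined w D₁ D₂) hbag, hρ, proj_eq_inl D₂ hmem]
      simp only [torsoMapR]
      exact congrArg Sum.inl (Subtype.ext hρ)
    · have hnot : x ∉ (combined w D₁ D₂).bag (Sum.inr a) := by
        intro hbag
        replace hbag : Sum.elim (fun _ => False)
          (fun u : {y : G₂.V // y ≠ w.v₂} => u.val ∈ D₂.bag a) (w.α x) := hbag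
        rw [hα] at hbag
        exact hmem hbag
      rw [hρ]
      rcases hproj : D₂.proj a u.val with p | c
      · rw [TreeCutDecomp.proj, dif_neg hmem] at hproj
        exact absurd hproj (by simp)
      · obtain ⟨s₂, hs₂, hr₂⟩ := proj_inr_spec D₂ hmem hproj
        have hbag' : x ∈ (combined w D₁ D₂).bag (Sum.inr s₂) := by
          show Sum.elim (fun _ => False)
            (fun u : {y : G₂.V // y ≠ w.v₂} => u.val ∈ D₂.bag s₂) (w.α x)
          rw [hα]; exact hs₂
        have hadjc : (combined w D₁ D₂).tree.Adj (Sum.inr a) (Sum.inr c.val) := c.prop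
        have hCproj : (combined w D₁ D₂).proj (Sum.inr a) x =
            Sum.inr ⟨Sum.inr c.val, hadjc⟩ :=
          proj_eq_inr (combined w D₁ D₂) hnot hadjc
            ⟨Sum.inr s₂, hbag', hr₂.map (homRdelAt₂ w D₁ D₂ a)⟩
        rw [hCproj]
        rfl

lemma torsoMapR_bij (a : D₂.T) : Function.Bijective (torsoMapR w D₁ D₂ a) := by
  constructor
  · rintro (x | ⟨(u | u), hu⟩) (x' | ⟨(u' | u'), hu'⟩) h <;> simp only [torsoMapR] at h
    · injection h with h
      have hρρ : ρ₂ w x.val = ρ₂ w x'.val := congrArg Subtype.val h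
      have hx := x.prop
      have hx' := x'.prop
      replace hx : Sum.elim (fun _ => False)
          (fun u : {y : G₂.V // y ≠ w.v₂} => u.val ∈ D₂.bag a) (w.α x.val) := hx
      replace hx' : Sum.elim (fun _ => False)
          (fun u : {y : G₂.V // y ≠ w.v₂} => u.val ∈ D₂.bag a) (w.α x'.val) := hx'
      rcases hα : w.α x.val with u | u <;> rw [hα] at hx
      · exact hx.elim
      rcases hα' : w.α x'.val with u' | u' <;> rw [hα'] at hx'
      · exact hx'.elim
      have h1 : ρ₂ w x.val = u.val := by unfold ρ₂; rw [hα]; rfl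
      have h2 : ρ₂ w x'.val = u'.val := by unfold ρ₂; rw [hα']; rfl
      have huu : u = u' := Subtype.ext (by rw [← h1, ← h2, hρρ])
      apply congrArg
      apply Subtype.ext
      rw [x_eq_σ₂ w hα, x_eq_σ₂ w hα']
      unfold σ₂
      rw [show (⟨u.val, u.prop⟩ : {y : G₂.V // y ≠ w.v₂}) = u from rfl,
        show (⟨u'.val, u'.prop⟩ : {y : G₂.V // y ≠ w.v₂}) = u' from rfl, huu]
    · exfalso
      injection h with h
      have hρv : ρ₂ w x.val = w.v₂ := congrArg Subtype.val h
      have hx := x.prop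
      replace hx : Sum.elim (fun _ => False)
          (fun u : {y : G₂.V // y ≠ w.v₂} => u.val ∈ D₂.bag a) (w.α x.val) := hx
      rcases hα : w.α x.val with u2 | u2 <;> rw [hα] at hx
      · exact hx
      · have h1 : ρ₂ w x.val = u2.val := by unfold ρ₂; rw [hα]; rfl
        exact u2.prop (by rw [← h1, hρv])
    · injection h
    · exfalso
      injection h with h
      have hρv : ρ₂ w x'.val = w.v₂ := (congrArg Subtype.val h).symm
      have hx' := x'.prop
      replace hx' : Sum.elim (fun _ => False)
          (fun u : {y : G₂.V // y ≠ w.v₂} => u.val ∈ D₂.bag a) (w.α x'.val) := hx'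
      rcases hα' : w.α x'.val with v | v <;> rw [hα'] at hx'
      · exact hx'
      · have h2 : ρ₂ w x'.val = v.val := by unfold ρ₂; rw [hα']; rfl
        exact v.prop (by rw [← h2, hρv])
    · obtain ⟨-, h2⟩ : a = t2 w D₂ ∧ u = t1 w D₁ := hu
      obtain ⟨-, h2'⟩ : a = t2 w D₂ ∧ u' = t1 w D₁ := hu'
      subst h2; subst h2'
      rfl
    · injection h
    · injection h
    · injection h
    · injection h with h
      have huu : u = u' := congrArg Subtype.val h
      subst huu
      rfl
  · rintro (⟨p, hp⟩ | ⟨u, hu⟩)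
    · by_cases hpv : p = w.v₂
      · subst hpv
        have hat : a = t2 w D₂ := bag_unique D₂ hp (mem_t2 w D₂)
        have hadj : (combined w D₁ D₂).tree.Adj (Sum.inr a) (Sum.inl (t1 w D₁)) :=
          ⟨hat, rfl⟩
        exact ⟨Sum.inr ⟨Sum.inl (t1 w D₁), hadj⟩, rfl⟩
      · have hbag : σ₂ w p hpv ∈ (combined w D₁ D₂).bag (Sum.inr a) := by
          show Sum.elim (fun _ => False)
            (fun u : {y : G₂.V // y ≠ w.v₂} => u.val ∈ D₂.bag a) (w.α (σ₂ w p hpv))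
          rw [α_σ₂]; exact hp
        exact ⟨Sum.inl ⟨σ₂ w p hpv, hbag⟩, congrArg Sum.inl (Subtype.ext (ρ₂_σ₂ w))⟩
    · exact ⟨Sum.inr ⟨Sum.inr u, hu⟩, rfl⟩

lemma proj_ends_eq₂ (a : D₂.T) (e : G.E) :
    Sym2.map (torsoMapR w D₁ D₂ a)
        (Sym2.map ((combined w D₁ D₂).proj (Sum.inr a)) (G.ends e)) =
      Sym2.map (D₂.proj a) (Sym2.map (ρ₂ w) (G.ends e)) := by
  obtain ⟨p, q, hpq⟩ := exists_eq_mk (G.ends e)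
  rw [hpq, Sym2.map_pair_eq, Sym2.map_pair_eq]
  show s(torsoMapR w D₁ D₂ a ((combined w D₁ D₂).proj (Sum.inr a) p),
      torsoMapR w D₁ D₂ a ((combined w D₁ D₂).proj (Sum.inr a) q)) = _
  exact congrArg₂ (fun x y => s(x, y)) (proj_comm₂ w D₁ D₂ a p) (proj_comm₂ w D₁ D₂ a q)

lemma torso_diag_iff₂ (a : D₂.T) (e : G.E) :
    (Sym2.map ((combined w D₁ D₂).proj (Sum.inr a)) (G.ends e)).IsDiag ↔
      (Sym2.map (D₂.proj a) (Sym2.map (ρ₂ w) (G.ends e))).IsDiag := by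
  exact (Sym2.isDiag_map (torsoMapR_bij w D₁ D₂ a).injective).symm.trans
    (Iff.of_eq (congrArg Sym2.IsDiag (proj_ends_eq₂ w D₁ D₂ a e)))

lemma map_ρ₂_ends_ι₂ (f : G₂.E) :
    Sym2.map (ρ₂ w) (G.ends (ι₂ w f)) = G₂.ends f := by
  by_cases hv : w.v₂ ∈ G₂.ends f
  · obtain ⟨x, hx, hxe⟩ := ends_at G₁ (w.π.symm ⟨f, hv⟩).prop
    obtain ⟨y, hy, hye⟩ := ends_at G₂ hv
    rw [ends_ι₂_mem w hv hx hy hxe hye, Sym2.map_pair_eq, ρ₂_σ₁, ρ₂_σ₂, hye]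
    exact Sym2.eq_swap
  · obtain ⟨x, y, hx, hy, hxy⟩ := ends_not_at G₂ hv
    rw [ends_ι₂_not_mem w hv hx hy hxy, Sym2.map_pair_eq, ρ₂_σ₂, ρ₂_σ₂, hxy]

/-- The edge map from the torso of `D₂` at `a` into the torso of the combined
decomposition at `Sum.inr a`. -/
noncomputable def ψR (a : D₂.T) (f : (D₂.torso a).E) :
    ((combined w D₁ D₂).torso (Sum.inr a)).E :=
  ⟨ι₂ w f.val, by
    rw [torso_diag_iff₂ w D₁ D₂ a, map_ρ₂_ends_ι₂ w]
    exact f.prop⟩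

lemma ψR_bij (a : D₂.T) : Function.Bijective (ψR w D₁ D₂ a) := by
  constructor
  · intro f f' h
    exact Subtype.ext (ι₂_inj w (congrArg Subtype.val h))
  · rintro ⟨e, he⟩
    rcases hβ : w.β e with (e₁ | e₂) | e₀
    · exfalso
      apply he
      have h2 : Sym2.map (ρ₂ w) (G.ends e) = s(w.v₂, w.v₂) := by
        obtain ⟨x, y, hx, hy, hxy⟩ := ends_not_at G₁ e₁.prop
        rw [← ι₁_eq_of_β_inl w hβ, ends_ι₁_not_mem w e₁.prop hx hy hxy,
          Sym2.map_pair_eq, ρ₂_σ₁, ρ₂_σ₁]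
      rw [torso_diag_iff₂ w D₁ D₂ a, h2, Sym2.map_pair_eq]
      exact Sym2.mk_isDiag_iff.2 rfl
    · have hι := ι₂_eq_of_β_inr w hβ
      have hnd : ¬ (Sym2.map (D₂.proj a) (G₂.ends e₂.val)).IsDiag := by
        intro hd
        apply he
        rw [torso_diag_iff₂ w D₁ D₂ a, ← hι, map_ρ₂_ends_ι₂ w]
        exact hd
      exact ⟨⟨e₂.val, hnd⟩, Subtype.ext hι⟩
    · have hι := ι₂_eq_of_β_merged w hβ
      have hnd : ¬ (Sym2.map (D₂.proj a) (G₂.ends (w.π e₀).val)).IsDiag := by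
        intro hd
        apply he
        rw [torso_diag_iff₂ w D₁ D₂ a, ← hι, map_ρ₂_ends_ι₂ w]
        exact hd
      exact ⟨⟨(w.π e₀).val, hnd⟩, Subtype.ext hι⟩

/-- The torso of the combined decomposition at a right node is isomorphic to the
corresponding torso of `D₂`. -/
noncomputable def torsoIsoR (a : D₂.T) :
    Iso ((combined w D₁ D₂).torso (Sum.inr a)) (D₂.torso a) where
  vmap := Equiv.ofBijective _ (torsoMapR_bij w D₁ D₂ a)
  emap := (Equiv.ofBijective _ (ψR_bij w D₁ D₂ a)).symm
  ends_map := by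
    intro e
    obtain ⟨f, rfl⟩ := (Equiv.ofBijective _ (ψR_bij w D₁ D₂ a)).surjective e
    rw [Equiv.symm_apply_apply]
    show Sym2.map (D₂.proj a) (G₂.ends f.val) =
      Sym2.map (torsoMapR w D₁ D₂ a)
        (Sym2.map ((combined w D₁ D₂).proj (Sum.inr a)) (G.ends (ι₂ w f.val)))
    rw [proj_ends_eq₂ w D₁ D₂ a, map_ρ₂_ends_ι₂ w]

lemma torsoIsoR_core (a : D₂.T) (x : ((combined w D₁ D₂).torso (Sum.inr a)).V)
    (hx : x ∈ (combined w D₁ D₂).torsoCore (Sum.inr a)) :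
    (torsoIsoR w D₁ D₂ a).vmap x ∈ D₂.torsoCore a := by
  obtain ⟨x', rfl⟩ := hx
  exact ⟨⟨ρ₂ w x'.val, ρ₂_mem_bag w D₁ D₂ x'.prop⟩, rfl⟩

end Torso2

end ESum

open Multigraph in
/-- tree-cut decompositions combine along edge sums, with adhesion the
maximum of `k` and the adhesions, and torsos isomorphic to original torsos with core
vertices mapped to core vertices. -/
theorem treeCutDecomp_of_edgeSum (k : ℕ) (G G₁ G₂ : Multigraph)
    (hsum : IsEdgeSum k G G₁ G₂) (D₁ : TreeCutDecomp G₁) (D₂ : TreeCutDecomp G₂) :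
    ∃ D : TreeCutDecomp G,
      D.adhesion = max k (max D₁.adhesion D₂.adhesion) ∧
      ∀ t : D.T,
        (∃ (t₁ : D₁.T) (φ : Iso (D.torso t) (D₁.torso t₁)),
          ∀ x ∈ D.torsoCore t, φ.vmap x ∈ D₁.torsoCore t₁) ∨
        (∃ (t₂ : D₂.T) (φ : Iso (D.torso t) (D₂.torso t₂)),
          ∀ x ∈ D.torsoCore t, φ.vmap x ∈ D₂.torsoCore t₂) := by
  obtain ⟨w⟩ := hsum
  refine ⟨ESum.combined w D₁ D₂, ESum.combined_adhesion w D₁ D₂, ?_⟩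
  rintro (a | a)
  · exact Or.inl ⟨a, ESum.torsoIsoL w D₁ D₂ a, ESum.torsoIsoL_core w D₁ D₂ a⟩
  · exact Or.inr ⟨a, ESum.torsoIsoR w D₁ D₂ a, ESum.torsoIsoR_core w D₁ D₂ a⟩
end
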